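/- arXiv:2207.04671 — 7 statements merged into one kernel-verified Lean document; each statement's English description precedes it below -/
import Mathlib

section
/- Let F be an uncountable field and let M be a vector space over the rational function field F(T). If M has countable dimension as an F-vector space, then M = 0. -/
open Polynomial

lemma linearIndependent_inv_X_sub_C (F : Type*) [Field F] :
    LinearIndependent F (fun a : F => ((RatFunc.X - RatFunc.C a : RatFunc F))⁻¹) := by
  classical
  rw [linearIndependent_iff']
  intro s g hg b hb
  set L := (IsScalarTower.toAlgHom F F[X] (RatFunc F)) with hL
  have hkey : ∀ a : F, (RatFunc.X - RatFunc.C a : RatFunc F) = L (X - C a) := by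
    intro a
    simp [hL, map_sub, RatFunc.algebraMap_X, RatFunc.algebraMap_C]
  have hne : ∀ a : F, (L (X - C a) : RatFunc F) ≠ 0 := by
    intro a
    simpa [hL] using RatFunc.algebraMap_ne_zero (X_sub_C_ne_zero a)
  set Q : F → F[X] := fun a => ∏ a' ∈ s.erase a, (X - C a') with hQ
  have hmul : ∑ a ∈ s, g a • Q a = 0 := by
    have h2 : ∑ a ∈ s, g a • (L (∏ a' ∈ s, (X - C a')) *
        (L (X - C a))⁻¹) = 0 := by
      calc ∑ a ∈ s, g a • (L (∏ a' ∈ s, (X - C a')) * (L (X - C a))⁻¹)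
          = L (∏ a' ∈ s, (X - C a')) * ∑ a ∈ s, g a • (L (X - C a))⁻¹ := by
            rw [Finset.mul_sum]; congr 1; ext a; rw [mul_smul_comm]
        _ = 0 := by
            rw [show ∑ a ∈ s, g a • (L (X - C a))⁻¹ = 0 from by
              simpa [hkey] using hg, mul_zero]
    have h3 : ∀ a ∈ s, L (∏ a' ∈ s, (X - C a')) * (L (X - C a))⁻¹ = L (Q a) := by
      intro a ha
      rw [← Finset.mul_prod_erase s _ ha, map_mul, mul_comm (L (X - C a)),
        mul_assoc, mul_inv_cancel₀ (hne a), mul_one]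
    rw [Finset.sum_congr rfl (fun a ha => by rw [h3 a ha])] at h2
    have h4 : L (∑ a ∈ s, g a • Q a) = 0 := by
      rw [map_sum]
      simpa using h2
    have hinj : Function.Injective L := RatFunc.algebraMap_injective F
    exact hinj (by simpa using h4)
  have := congrArg (Polynomial.eval b) hmul
  rw [Polynomial.eval_finset_sum] at this
  simp only [Polynomial.eval_smul, smul_eq_mul, Polynomial.eval_zero] at this
  rw [Finset.sum_eq_single b (fun a ha hab => by
      have hb' : b ∈ s.erase a := Finset.mem_erase.mpr ⟨(Ne.symm hab), hb⟩
      rw [hQ]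
      simp only
      rw [Polynomial.eval_prod, Finset.prod_eq_zero hb' (by simp), mul_zero])
    (fun hbs => absurd hb hbs)] at this
  have hQb : (Q b).eval b ≠ 0 := by
    rw [hQ]
    simp only
    rw [Polynomial.eval_prod]
    refine Finset.prod_ne_zero_iff.mpr fun a' ha' => ?_
    have : a' ≠ b := Finset.ne_of_mem_erase ha'
    simp [sub_eq_zero, this.symm]
  exact (mul_eq_zero.mp this).resolve_right hQb

/-- Let `F` be an uncountable field and let `M` be a vector space over the rational function
field `F(T)`. If `M` has countable dimension as an `F`-vector space (i.e. it admits a countable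
spanning set over `F`), then `M = 0`. -/
theorem stmt_1 (F : Type*) [Field F] [Uncountable F]
    (M : Type*) [AddCommGroup M] [Module (RatFunc F) M]
    [Module F M] [IsScalarTower F (RatFunc F) M]
    (h : ∃ s : Set M, s.Countable ∧ Submodule.span F s = ⊤) :
    ∀ m : M, m = 0 := by
  intro m
  by_contra hm
  obtain ⟨s, hsc, hspan⟩ := h
  have hrank : Module.rank F M ≤ Cardinal.aleph0 := by
    have h1 := rank_span_le (R := F) s
    rw [hspan, rank_top] at h1
    exact h1.trans hsc.le_aleph0
  let φ : RatFunc F →ₗ[F] M :=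
    { toFun := fun r => r • m
      map_add' := fun x y => add_smul x y m
      map_smul' := fun c r => by simp [smul_assoc] }
  have hker : LinearMap.ker φ = ⊥ := by
    rw [LinearMap.ker_eq_bot']
    intro r hr
    have : r • m = 0 := hr
    rcases smul_eq_zero.mp this with h | h
    · exact h
    · exact absurd h hm
  have li := (linearIndependent_inv_X_sub_C F).map' φ hker
  have hcard := li.cardinal_lift_le_rank
  have : Cardinal.lift.{_} (Cardinal.mk F) ≤ Cardinal.aleph0 := by
    refine hcard.trans ?_
    rw [Cardinal.lift_le_aleph0]
    exact hrank
  rw [Cardinal.lift_le_aleph0] at this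
  exact absurd this (Cardinal.aleph0_lt_mk (α := F)).not_ge
end

section
/- Let F be an uncountable field, let g ∈ F[T] be a nonzero polynomial, and let S ⊆ F[T] be the multiplicative set of polynomials coprime to g. Let M be a module over the localization S⁻¹F[T] which has countable dimension as an F-vector space. Then every element of M is annihilated by some power of g. -/
open Polynomial

private lemma stmt2_aux {F : Type*} [Field F] (g : F[X]) :
    ∀ (n : ℕ) (p : F[X]), p.natDegree ≤ n → p ≠ 0 →
      ∃ (N : ℕ) (q : F[X]), IsCoprime q g ∧ p ∣ q * g ^ N := by
  intro n
  induction n with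
  | zero =>
      intro p hd hp
      refine ⟨0, p, ?_, by simp⟩
      obtain ⟨x, hx⟩ := natDegree_eq_zero.mp (Nat.le_zero.mp hd)
      have hx0 : x ≠ 0 := fun h => hp (by rw [← hx, h, map_zero])
      obtain ⟨u, hu⟩ := (isUnit_C.mpr hx0.isUnit)
      refine ⟨((u⁻¹ : F[X]ˣ) : F[X]), 0, ?_⟩
      rw [← hx, ← hu]
      simp
  | succ n ih =>
      intro p hd hp
      classical
      by_cases hc : IsCoprime p g
      · exact ⟨0, p, hc, by simp⟩
      · have hdu : ¬ IsUnit (EuclideanDomain.gcd p g) :=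
          fun h2 => hc (EuclideanDomain.gcd_isUnit_iff.mp h2)
        have hdg : EuclideanDomain.gcd p g ∣ g := EuclideanDomain.gcd_dvd_right p g
        have hd0 : EuclideanDomain.gcd p g ≠ 0 :=
          fun h2 => hp ((EuclideanDomain.gcd_eq_zero_iff.mp h2).1)
        obtain ⟨p', hpp⟩ := EuclideanDomain.gcd_dvd_left p g
        have hp' : p' ≠ 0 := by
          intro h2
          exact hp (by rw [hpp, h2, mul_zero])
        have hd1 : 1 ≤ (EuclideanDomain.gcd p g).natDegree := by
          by_contra hlt
          push_neg at hlt
          obtain ⟨x, hx⟩ := natDegree_eq_zero.mp (Nat.lt_one_iff.mp hlt)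
          have hx0 : x ≠ 0 := fun h2 => hd0 (by rw [← hx, h2, map_zero])
          exact hdu (hx ▸ isUnit_C.mpr hx0.isUnit)
        have hdeg : p'.natDegree ≤ n := by
          have hmul : p.natDegree = (EuclideanDomain.gcd p g).natDegree + p'.natDegree := by
            conv_lhs => rw [hpp]
            exact natDegree_mul hd0 hp'
          omega
        obtain ⟨N, q, hq, hdvd⟩ := ih p' hdeg hp'
        refine ⟨N + 1, q, hq, ?_⟩
        rw [hpp]
        have h1 : EuclideanDomain.gcd p g * p' ∣ EuclideanDomain.gcd p g * (q * g ^ N) :=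
          mul_dvd_mul_left _ hdvd
        have h2 : EuclideanDomain.gcd p g * (q * g ^ N) ∣ g * (q * g ^ N) :=
          mul_dvd_mul_right hdg _
        refine h1.trans (h2.trans (dvd_of_eq (by ring)))

private lemma stmt2_countable {F : Type u} [Field F] {M : Type v} [AddCommGroup M] [Module F M]
    (A : Set F) (v : A → M) (hli : LinearIndependent F v)
    (s : Set M) (hsc : s.Countable) (hss : Submodule.span F s = ⊤) : A.Countable := by
  have hrank : Module.rank F M ≤ Cardinal.aleph0 := by
    have h1 := rank_span_le (R := F) s
    rw [hss] at h1
    have h2 : Cardinal.mk s ≤ Cardinal.aleph0 := by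
      have := hsc.to_subtype
      exact Cardinal.mk_le_aleph0
    calc Module.rank F M = Module.rank F (⊤ : Submodule F M) := (rank_top F M).symm
      _ ≤ Cardinal.mk s := h1
      _ ≤ Cardinal.aleph0 := h2
  have hcard := hli.cardinal_lift_le_rank
  have hfin : Cardinal.lift.{v} (Cardinal.mk A) ≤ Cardinal.aleph0 := by
    refine hcard.trans ?_
    calc Cardinal.lift.{u} (Module.rank F M)
        ≤ Cardinal.lift.{u} (Cardinal.aleph0) := Cardinal.lift_le.mpr hrank
      _ = Cardinal.aleph0 := Cardinal.lift_aleph0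
  exact Set.countable_coe_iff.mp
    (Cardinal.mk_le_aleph0_iff.mp (Cardinal.lift_le_aleph0.mp hfin))

/-- Let `F` be an uncountable field, `g ∈ F[T]` a nonzero polynomial, and
`S ⊆ F[T]` the multiplicative set of polynomials coprime to `g`.  If `M` is a module over the
localization `S⁻¹F[T]` which has countable dimension as an `F`-vector space, then every element
of `M` is annihilated by some power of `g`. -/
theorem stmt_2 (F : Type*) [Field F] [Uncountable F]
    (g : Polynomial F) (hg : g ≠ 0)
    (S : Submonoid (Polynomial F)) (hS : ∀ p : Polynomial F, p ∈ S ↔ IsCoprime p g)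
    (M : Type*) [AddCommGroup M] [Module (Localization S) M]
    [Module F M] [IsScalarTower F (Localization S) M]
    (h : ∃ s : Set M, s.Countable ∧ Submodule.span F s = ⊤) :
    ∀ m : M, ∃ n : ℕ, (algebraMap (Polynomial F) (Localization S) g) ^ n • m = 0 := by
  classical
  obtain ⟨s, hsc, hss⟩ := h
  set R := Localization S with hR
  by_cases hgu : IsUnit g
  · -- degenerate case: `0 ∈ S`, so the localization is trivial and `M = 0`
    have h0 : (0 : Polynomial F) ∈ S := (hS 0).mpr (isCoprime_zero_left.mpr hgu)
    have hunit : IsUnit (algebraMap (Polynomial F) R 0) :=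
      IsLocalization.map_units R (⟨0, h0⟩ : S)
    rw [map_zero] at hunit
    have h10 : (1 : R) = 0 := (isUnit_zero_iff.mp hunit).symm
    intro m
    refine ⟨0, ?_⟩
    rw [pow_zero, one_smul]
    calc m = (1 : R) • m := (one_smul R m).symm
      _ = (0 : R) • m := by rw [h10]
      _ = 0 := zero_smul R m
  · intro m
    by_contra hcon
    push_neg at hcon
    -- Step 1: no nonzero polynomial annihilates m
    have fact1 : ∀ p : Polynomial F, algebraMap (Polynomial F) R p • m = 0 → p = 0 := by
      intro p hp0
      by_contra hp
      obtain ⟨N, q, hq, c, hc⟩ := stmt2_aux g p.natDegree p le_rfl hp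
      have hqS : q ∈ S := (hS q).mpr hq
      have hzero : (algebraMap (Polynomial F) R q * algebraMap (Polynomial F) R g ^ N) • m = 0 := by
        have : algebraMap (Polynomial F) R (q * g ^ N) • m = 0 := by
          rw [hc, mul_comm p c, map_mul, mul_smul, hp0, smul_zero]
        rw [map_mul, map_pow] at this
        exact this
      obtain ⟨u, hu⟩ := IsLocalization.map_units R (⟨q, hqS⟩ : S)
      rw [← hu] at hzero
      have := congrArg (fun z => ((u⁻¹ : (Localization S)ˣ) : R) • z) hzero
      simp only [smul_smul, Units.inv_mul_cancel_left, smul_zero] at this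
      exact hcon N this
    -- Step 2: for each non-root a of g, invert X - C a
    set A : Set F := {a | ¬ g.IsRoot a} with hA
    have hmem : ∀ a : A, (X - C (a : F)) ∈ S := fun a =>
      (hS _).mpr (((irreducible_X_sub_C (a : F)).coprime_iff_not_dvd).mpr
        (fun hd => a.2 (dvd_iff_isRoot.mp hd)))
    have hu : ∀ a : A, IsUnit (algebraMap (Polynomial F) R (X - C (a : F))) := fun a =>
      IsLocalization.map_units R (⟨_, hmem a⟩ : S)
    set v : A → M := fun a => (((hu a).unit⁻¹ : Rˣ) : R) • m with hv
    have hsmul : ∀ (cc : F) (x : M), cc • x = algebraMap (Polynomial F) R (C cc) • x := by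
      intro cc x
      rw [← algebraMap_smul R cc x, IsScalarTower.algebraMap_apply F (Polynomial F) R,
        Polynomial.algebraMap_eq]
    have hli : LinearIndependent F v := by
      rw [linearIndependent_iff']
      intro t c h0 a₀ ha₀
      set P : Polynomial F := ∏ a ∈ t, (X - C (a : F)) with hP
      have key : ∀ a ∈ t, algebraMap (Polynomial F) R P • v a
          = algebraMap (Polynomial F) R (∏ b ∈ t.erase a, (X - C (b : F))) • m := by
        intro a ha
        have hsplit : P = (X - C (a : F)) * ∏ b ∈ t.erase a, (X - C (b : F)) :=
          (Finset.mul_prod_erase t _ ha).symm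
        have hPmap : algebraMap (Polynomial F) R P
            = ((hu a).unit : R) * algebraMap (Polynomial F) R (∏ b ∈ t.erase a, (X - C (b : F))) := by
          rw [hsplit, map_mul, (hu a).unit_spec]
        rw [hv]
        show algebraMap (Polynomial F) R P • ((((hu a).unit⁻¹ : Rˣ) : R) • m) = _
        rw [smul_smul, hPmap, mul_comm (((hu a).unit : R)), Units.mul_inv_cancel_right]
      have key2 : ∀ a ∈ t, algebraMap (Polynomial F) R P • (c a • v a)
          = algebraMap (Polynomial F) R (C (c a) * ∏ b ∈ t.erase a, (X - C (b : F))) • m := by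
        intro a ha
        calc algebraMap (Polynomial F) R P • (c a • v a)
            = algebraMap (Polynomial F) R P • (algebraMap (Polynomial F) R (C (c a)) • v a) := by
              rw [← hsmul]
          _ = (algebraMap (Polynomial F) R (C (c a)) * algebraMap (Polynomial F) R P) • v a := by
              rw [smul_smul, mul_comm]
          _ = algebraMap (Polynomial F) R (C (c a)) • (algebraMap (Polynomial F) R P • v a) := by
              rw [mul_smul]
          _ = _ := by rw [key a ha, map_mul, mul_smul]
      have h1 : algebraMap (Polynomial F) R
          (∑ a ∈ t, C (c a) * ∏ b ∈ t.erase a, (X - C (b : F))) • m = 0 := by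
        rw [map_sum, Finset.sum_smul]
        calc ∑ a ∈ t, algebraMap (Polynomial F) R
              (C (c a) * ∏ b ∈ t.erase a, (X - C (b : F))) • m
            = ∑ a ∈ t, algebraMap (Polynomial F) R P • (c a • v a) :=
              Finset.sum_congr rfl fun a ha => (key2 a ha).symm
          _ = algebraMap (Polynomial F) R P • ∑ a ∈ t, c a • v a := (Finset.smul_sum).symm
          _ = 0 := by rw [h0, smul_zero]
      have hpoly : (∑ a ∈ t, C (c a) * ∏ b ∈ t.erase a, (X - C (b : F))) = 0 := fact1 _ h1
      have hev := congrArg (Polynomial.eval (a₀ : F)) hpoly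
      rw [eval_finset_sum, eval_zero] at hev
      have hred : ∑ a ∈ t, ((C (c a) * ∏ b ∈ t.erase a, (X - C (b : F))).eval (a₀ : F))
          = c a₀ * ∏ b ∈ t.erase a₀, ((a₀ : F) - (b : F)) := by
        rw [Finset.sum_eq_single a₀]
        · simp [eval_prod]
        · intro a ha hne
          have ha₀mem : a₀ ∈ t.erase a := Finset.mem_erase.mpr ⟨fun h => hne h.symm, ha₀⟩
          rw [eval_mul, eval_prod, Finset.prod_eq_zero ha₀mem (by simp), mul_zero]
        · intro h; exact absurd ha₀ h
      rw [hred] at hev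
      have hprod : (∏ b ∈ t.erase a₀, ((a₀ : F) - (b : F))) ≠ 0 := by
        refine Finset.prod_ne_zero_iff.mpr fun b hb => ?_
        have hbne : b ≠ a₀ := (Finset.mem_erase.mp hb).1
        intro hzero
        exact hbne (Subtype.ext (sub_eq_zero.mp hzero).symm)
      have := mul_eq_zero.mp hev
      tauto
    -- Step 3: cardinality contradiction
    have hAcount : (A : Set F).Countable := stmt2_countable A v hli s hsc hss
    have hcompl : (Aᶜ : Set F).Countable := by
      have : (Aᶜ : Set F) = {a | g.IsRoot a} := by
        ext a; simp [hA]
      rw [this]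
      exact (Polynomial.finite_setOf_isRoot hg).countable
    have huniv : (Set.univ : Set F).Countable := by
      rw [← Set.union_compl_self A]
      exact hAcount.union hcompl
    exact not_countable (Set.countable_univ_iff.mp huniv)
end

section
/- Let R be a commutative ring, let g₀, …, g_n ∈ R be elements generating the unit ideal, and let M be any R-module. Then the extended ordered Čech complex 0 → M → ∏ᵢ M_{gᵢ} → ∏_{i<j} M_{gᵢgⱼ} → ⋯ → M_{g₀⋯g_n} → 0 is exact, where M_g denotes the localization of M at the element g and the differentials are the usual alternating sums of localization maps. -/
section CechSetup

variable {R : Type u} [CommRing R]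

/-- Scalar multiplication by a divisor of `b` is invertible on the localization of a module
at the powers of `b`. -/
theorem cechAuxIsUnit (M : Type u) [AddCommGroup M] [Module R M] (a b : R) (h : a ∣ b)
    (x : Submonoid.powers a) :
    IsUnit (algebraMap R (Module.End R (LocalizedModule (Submonoid.powers b) M)) x) := by
  obtain ⟨m, hm⟩ := x.2
  have hm' : a ^ m = (x : R) := hm
  obtain ⟨c, hc⟩ := h
  have hb : IsUnit (algebraMap R (Module.End R (LocalizedModule (Submonoid.powers b) M))
      (b ^ m)) :=
    IsLocalizedModule.map_units (LocalizedModule.mkLinearMap (Submonoid.powers b) M)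
      (⟨b ^ m, ⟨m, rfl⟩⟩ : Submonoid.powers b)
  have hx : (b : R) ^ m = (x : R) * c ^ m := by rw [hc, mul_pow, hm']
  rw [hx, map_mul] at hb
  exact (((Commute.all ((x : R)) (c ^ m)).map (algebraMap R
    (Module.End R (LocalizedModule (Submonoid.powers b) M)))).isUnit_mul_iff.mp hb).1

/-- The canonical localization map `M_a → M_b` when `a ∣ b`. -/
noncomputable def locTrans (M : Type u) [AddCommGroup M] [Module R M] (a b : R) (h : a ∣ b) :
    LocalizedModule (Submonoid.powers a) M →ₗ[R] LocalizedModule (Submonoid.powers b) M :=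
  LocalizedModule.lift (Submonoid.powers a)
    (LocalizedModule.mkLinearMap (Submonoid.powers b) M) (cechAuxIsUnit M a b h)

variable (n : ℕ) (g : Fin (n + 1) → R) (M : Type u) [AddCommGroup M] [Module R M]

/-- The degree-`k` component of the ordered Čech complex of `M` with respect to
`g₀, …, g_n`: the product, over all strictly increasing `(k+1)`-tuples `s` in `{0, …, n}`,
of the localizations of `M` at the powers of `∏ j, g (s j)`. -/
abbrev CechComponent (k : ℕ) : Type u :=
  ∀ s : Fin (k + 1) ↪o Fin (n + 1), LocalizedModule (Submonoid.powers (∏ j, g (s j))) M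

/-- The augmentation `M → ∏ᵢ M_{gᵢ}` of the Čech complex. -/
noncomputable def cechEps (m : M) : CechComponent n g M 0 :=
  fun s => LocalizedModule.mkLinearMap (Submonoid.powers (∏ j, g (s j))) M m

/-- The Čech differential, given by the usual alternating sums of localization maps. -/
noncomputable def cechD (k : ℕ) (x : CechComponent n g M k) : CechComponent n g M (k + 1) :=
  fun t => ∑ j : Fin (k + 2), ((-1 : ℤ) ^ (j : ℕ)) •
    locTrans M (∏ i, g (((Fin.succAboveOrderEmb j).trans t) i)) (∏ i, g (t i))
      ⟨g (t j), by
        rw [Fin.prod_univ_succAbove (fun i => g (t i)) j, mul_comm]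
        rfl⟩
      (x ((Fin.succAboveOrderEmb j).trans t))

end CechSetup

section CechExtra

variable {R : Type u} [CommRing R]

variable (M : Type u) [AddCommGroup M] [Module R M]
-- new material
variable (M : Type u) [AddCommGroup M] [Module R M]

theorem cechAuxIsUnit' (a b : R) (e : ℕ) (h : a ∣ b ^ e) (x : Submonoid.powers a) :
    IsUnit (algebraMap R (Module.End R (LocalizedModule (Submonoid.powers b) M)) x) := by
  obtain ⟨m, hm⟩ := x.2
  have hm' : a ^ m = (x : R) := hm
  obtain ⟨c, hc⟩ := h
  have hb : IsUnit (algebraMap R (Module.End R (LocalizedModule (Submonoid.powers b) M))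
      (b ^ (e * m))) :=
    IsLocalizedModule.map_units (LocalizedModule.mkLinearMap (Submonoid.powers b) M)
      (⟨b ^ (e * m), ⟨e * m, rfl⟩⟩ : Submonoid.powers b)
  have hx : (b : R) ^ (e * m) = (x : R) * c ^ m := by
    rw [pow_mul, hc, mul_pow, hm']
  rw [hx, map_mul] at hb
  exact (((Commute.all ((x : R)) (c ^ m)).map (algebraMap R
    (Module.End R (LocalizedModule (Submonoid.powers b) M)))).isUnit_mul_iff.mp hb).1

/-- Generalized localization transition map `M_a → M_b` when `a ∣ b ^ e`. -/
noncomputable def locMap (a b : R) (e : ℕ) (h : a ∣ b ^ e) :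
    LocalizedModule (Submonoid.powers a) M →ₗ[R] LocalizedModule (Submonoid.powers b) M :=
  LocalizedModule.lift (Submonoid.powers a)
    (LocalizedModule.mkLinearMap (Submonoid.powers b) M) (cechAuxIsUnit' M a b e h)

theorem locMap_irrel (a b : R) (e e' : ℕ) (h : a ∣ b ^ e) (h' : a ∣ b ^ e') :
    locMap M a b e h = locMap M a b e' h' := rfl

theorem locTrans_eq_locMap (a b : R) (h : a ∣ b) :
    locTrans M a b h = locMap M a b 1 (by rwa [pow_one]) := rfl

theorem locMap_mk_one (a b : R) (e : ℕ) (h : a ∣ b ^ e) (m : M) :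
    locMap M a b e h (LocalizedModule.mk m 1) = LocalizedModule.mk m 1 := by
  have := LocalizedModule.lift_comp (Submonoid.powers a)
    (LocalizedModule.mkLinearMap (Submonoid.powers b) M) (cechAuxIsUnit' M a b e h)
  exact LinearMap.congr_fun this m

theorem locMap_unique (a b : R) (e : ℕ) (h : a ∣ b ^ e)
    (l : LocalizedModule (Submonoid.powers a) M →ₗ[R]
        LocalizedModule (Submonoid.powers b) M)
    (hl : ∀ m : M, l (LocalizedModule.mk m 1) = LocalizedModule.mk m 1) :
    l = locMap M a b e h := by
  refine (LocalizedModule.lift_unique (Submonoid.powers a)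
    (LocalizedModule.mkLinearMap (Submonoid.powers b) M) (cechAuxIsUnit' M a b e h) l ?_).symm
  ext m
  exact hl m

theorem locMap_comp (a b c : R) (e f : ℕ) (h1 : a ∣ b ^ e) (h2 : b ∣ c ^ f) (e' : ℕ)
    (h3 : a ∣ c ^ e') (x : LocalizedModule (Submonoid.powers a) M) :
    locMap M b c f h2 (locMap M a b e h1 x) = locMap M a c e' h3 x := by
  have : (locMap M b c f h2).comp (locMap M a b e h1) = locMap M a c e' h3 := by
    apply locMap_unique
    intro m
    simp [locMap_mk_one]
  exact congrArg (fun l => l x) this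

theorem locMap_id (a : R) (e : ℕ) (h : a ∣ a ^ e)
    (x : LocalizedModule (Submonoid.powers a) M) :
    locMap M a a e h x = x := by
  have : (LinearMap.id : LocalizedModule (Submonoid.powers a) M →ₗ[R] _)
      = locMap M a a e h := by
    apply locMap_unique
    intro m
    rfl
  exact (congrArg (fun l => l x) this).symm

theorem mk_zero_iff {S : Submonoid R} (m : M) (s : S) :
    (LocalizedModule.mk m s : LocalizedModule S M) = 0 ↔ ∃ u : S, (u : R) • m = 0 := by
  rw [← LocalizedModule.zero_mk (1 : S), LocalizedModule.mk_eq]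
  constructor
  · rintro ⟨u, hu⟩
    refine ⟨u, ?_⟩
    simpa [Submonoid.smul_def, smul_smul] using hu
  · rintro ⟨u, hu⟩
    refine ⟨u, ?_⟩
    simpa [Submonoid.smul_def, smul_smul] using hu

theorem smul_injective (b : R) (u : Submonoid.powers b)
    {x y : LocalizedModule (Submonoid.powers b) M} (h : (u : R) • x = (u : R) • y) : x = y := by
  have hu := cechAuxIsUnit' M b b 1 (by rw [pow_one]) u
  have hb := (Module.End.isUnit_iff _).mp hu
  apply hb.injective
  simpa [Module.algebraMap_end_apply] using h


end CechExtra

section Comb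

/-- Two order embeddings between `Fin` types with the same range are equal. -/
theorem orderEmb_range_ext {k m : ℕ} {f f' : Fin k ↪o Fin m}
    (h : Set.range f = Set.range f') : f = f' := by
  classical
  let s : Finset (Fin m) := Finset.univ.map f'.toEmbedding
  have hs : s.card = k := by simp [s]
  have h1 : ∀ x, f' x ∈ s := fun x => by simp [s]
  have h2 : ∀ x, f x ∈ s := by
    intro x
    have : f x ∈ Set.range f' := h ▸ Set.mem_range_self x
    obtain ⟨y, hy⟩ := this
    simp [s, ← hy]
  rw [Finset.orderEmbOfFin_unique' hs h2, Finset.orderEmbOfFin_unique' hs h1]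

theorem range_trans_succAbove {k m : ℕ} (t : Fin (k + 1) ↪o Fin m) (j : Fin (k + 1)) :
    Set.range ((Fin.succAboveOrderEmb j).trans t) = Set.range t \ {t j} := by
  ext b
  constructor
  · rintro ⟨a, rfl⟩
    refine ⟨⟨j.succAbove a, rfl⟩, ?_⟩
    simp only [Set.mem_singleton_iff]
    intro hb
    exact Fin.succAbove_ne j a (t.injective hb)
  · rintro ⟨⟨a, rfl⟩, hb⟩
    have ha : a ≠ j := fun h => hb (by rw [h]; rfl)
    obtain ⟨c, hc⟩ := Fin.exists_succAbove_eq ha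
    exact ⟨c, by simp [Fin.succAboveOrderEmb, RelEmbedding.trans_apply, hc]⟩

private theorem card_ins {k m : ℕ} (t : Fin (k + 1) ↪o Fin (m + 1)) (i : Fin (m + 1))
    (h : i ∉ Set.range t) : (insert i (Finset.univ.map t.toEmbedding)).card = k + 2 := by
  rw [Finset.card_insert_of_notMem (by simpa using fun x => fun hx => h ⟨x, hx⟩)]
  simp

/-- Insert `i` into the range of an order embedding. -/
noncomputable def cechIns {k m : ℕ} (t : Fin (k + 1) ↪o Fin (m + 1)) (i : Fin (m + 1))
    (h : i ∉ Set.range t) : Fin (k + 2) ↪o Fin (m + 1) :=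
  (insert i (Finset.univ.map t.toEmbedding)).orderEmbOfFin (card_ins t i h)

/-- The position of `i` in `cechIns t i h`. -/
noncomputable def cechPos {k m : ℕ} (t : Fin (k + 1) ↪o Fin (m + 1)) (i : Fin (m + 1))
    (h : i ∉ Set.range t) : Fin (k + 2) :=
  ((insert i (Finset.univ.map t.toEmbedding)).orderIsoOfFin (card_ins t i h)).symm
    ⟨i, Finset.mem_insert_self _ _⟩

variable {k m : ℕ} (t : Fin (k + 1) ↪o Fin (m + 1)) (i : Fin (m + 1)) (h : i ∉ Set.range t)

theorem cechIns_pos : cechIns t i h (cechPos t i h) = i := by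
  have := Finset.coe_orderIsoOfFin_apply (insert i (Finset.univ.map t.toEmbedding))
    (card_ins t i h) (cechPos t i h)
  rw [cechIns, ← this, cechPos, OrderIso.apply_symm_apply]

theorem range_cechIns : Set.range (cechIns t i h) = insert i (Set.range t) := by
  rw [cechIns, Finset.range_orderEmbOfFin, Finset.coe_insert, Finset.coe_map]
  simp

theorem cechIns_delete :
    (Fin.succAboveOrderEmb (cechPos t i h)).trans (cechIns t i h) = t := by
  apply orderEmb_range_ext
  rw [range_trans_succAbove, cechIns_pos, range_cechIns]
  exact Set.insert_diff_self_of_notMem h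

theorem cechIns_unique (u : Fin (k + 2) ↪o Fin (m + 1)) (q : Fin (k + 2)) (hq : u q = i)
    (hd : (Fin.succAboveOrderEmb q).trans u = t) :
    u = cechIns t i h ∧ q = cechPos t i h := by
  have hru : Set.range u = insert i (Set.range t) := by
    rw [← hd, range_trans_succAbove, hq]
    rw [Set.insert_diff_singleton, Set.insert_eq_self.mpr (Set.mem_range.mpr ⟨q, hq⟩)]
  have hu : u = cechIns t i h := orderEmb_range_ext (by rw [hru, range_cechIns])
  refine ⟨hu, ?_⟩
  apply (cechIns t i h).injective
  rw [cechIns_pos, ← hu]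
  exact hq

theorem neg_one_pow_odd_sum {X Y : ℕ} (hXY : Odd (X + Y)) :
    ((-1 : ℤ)) ^ X = -((-1 : ℤ)) ^ Y := by
  rcases Nat.even_or_odd X with hx | hx
  · have hy : Odd Y := by
      rw [Nat.odd_iff] at hXY ⊢; rw [Nat.even_iff] at hx; omega
    rw [Even.neg_one_pow hx, Odd.neg_one_pow hy]; ring_nf
  · have hy : Even Y := by
      rw [Nat.odd_iff] at hXY hx; rw [Nat.even_iff]; omega
    rw [Odd.neg_one_pow hx, Even.neg_one_pow hy]

theorem cechParity_odd {m : ℕ} (a : Fin (m + 1)) (l : Fin m) (c : Fin m)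
    (h : (a.succAbove l).succAbove c = a) :
    Odd (((a : ℕ) + l) + (((a.succAbove l : Fin (m + 1)) : ℕ) + c)) := by
  rw [Nat.odd_iff]
  rcases lt_or_ge (Fin.castSucc l) a with h1 | h1
  · rw [Fin.succAbove_of_castSucc_lt _ _ h1] at h ⊢
    have e2 : (l : ℕ) < (a : ℕ) := h1
    rcases lt_or_ge (Fin.castSucc c) (Fin.castSucc l) with h2 | h2
    · rw [Fin.succAbove_of_castSucc_lt _ _ h2] at h
      have e1 : (c : ℕ) = (a : ℕ) := by rw [← h]; rfl
      have e3 : (c : ℕ) < (l : ℕ) := h2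
      omega
    · rw [Fin.succAbove_of_le_castSucc _ _ h2] at h
      have e1 : (c : ℕ) + 1 = (a : ℕ) := by rw [← h]; rfl
      simp only [Fin.coe_castSucc]
      omega
  · rw [Fin.succAbove_of_le_castSucc _ _ h1] at h ⊢
    have e2 : (a : ℕ) ≤ (l : ℕ) := h1
    rcases lt_or_ge (Fin.castSucc c) (Fin.succ l) with h2 | h2
    · rw [Fin.succAbove_of_castSucc_lt _ _ h2] at h
      have e1 : (c : ℕ) = (a : ℕ) := by rw [← h]; rfl
      simp only [Fin.val_succ]
      omega
    · rw [Fin.succAbove_of_le_castSucc _ _ h2] at h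
      have e1 : (c : ℕ) + 1 = (a : ℕ) := by rw [← h]; rfl
      have e3 : (l : ℕ) + 1 ≤ (c : ℕ) := h2
      omega

end Comb

section CechSetup2

variable {R : Type u} [CommRing R]

variable (n : ℕ) (g : Fin (n + 1) → R) (M : Type u) [AddCommGroup M] [Module R M]

theorem prod_cechIns {k : ℕ} (t : Fin (k + 1) ↪o Fin (n + 1)) (i : Fin (n + 1))
    (h : i ∉ Set.range t) :
    (∏ j, g (cechIns t i h j)) = g i * ∏ j, g (t j) := by
  rw [Fin.prod_univ_succAbove (fun j => g (cechIns t i h j)) (cechPos t i h), cechIns_pos]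
  congr 1
  refine Finset.prod_congr rfl fun j _ => ?_
  have := congrFun (congrArg (fun (f : Fin (k + 1) ↪o Fin (n + 1)) => (f : Fin (k + 1) → Fin (n + 1)))
    (cechIns_delete t i h)) j
  rw [← this]
  rfl

variable (i₀ : Fin (n + 1))

abbrev DComp (k : ℕ) : Type u :=
  ∀ s : Fin (k + 1) ↪o Fin (n + 1),
    LocalizedModule (Submonoid.powers (g i₀ * ∏ j, g (s j))) M

theorem del_dvd {k : ℕ} (t : Fin (k + 2) ↪o Fin (n + 1)) (j : Fin (k + 2)) :
    (∏ i, g (((Fin.succAboveOrderEmb j).trans t) i)) ∣ ∏ i, g (t i) :=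
  ⟨g (t j), by rw [Fin.prod_univ_succAbove (fun i => g (t i)) j, mul_comm]; rfl⟩

noncomputable def dD (k : ℕ) (x : DComp n g M i₀ k) : DComp n g M i₀ (k + 1) :=
  fun t => ∑ j : Fin (k + 2), ((-1 : ℤ) ^ (j : ℕ)) •
    locMap M (g i₀ * ∏ i, g (((Fin.succAboveOrderEmb j).trans t) i)) (g i₀ * ∏ i, g (t i)) 1
      (by rw [pow_one]; exact mul_dvd_mul_left _ (del_dvd n g t j))
      (x ((Fin.succAboveOrderEmb j).trans t))

noncomputable def locC (k : ℕ) (x : CechComponent n g M k) : DComp n g M i₀ k :=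
  fun s => locMap M (∏ j, g (s j)) (g i₀ * ∏ j, g (s j)) 1
    (by rw [pow_one]; exact dvd_mul_left _ _) (x s)

theorem ins_dvd {k : ℕ} (s : Fin (k + 1) ↪o Fin (n + 1)) (hi : i₀ ∉ Set.range s) :
    (g i₀ * ∏ j, g (cechIns s i₀ hi j)) ∣ (g i₀ * ∏ j, g (s j)) ^ 2 := by
  rw [prod_cechIns, pow_two]
  exact mul_dvd_mul (dvd_mul_right _ _) dvd_rfl

noncomputable def hComp (k : ℕ) (z : DComp n g M i₀ (k + 1)) : DComp n g M i₀ k :=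
  fun s =>
    if hi : i₀ ∈ Set.range s then 0
    else ((-1 : ℤ) ^ ((cechPos s i₀ hi : ℕ))) •
      locMap M (g i₀ * ∏ j, g (cechIns s i₀ hi j)) (g i₀ * ∏ j, g (s j)) 2
        (ins_dvd n g i₀ s hi) (z (cechIns s i₀ hi))

theorem locC_cechD (k : ℕ) (x : CechComponent n g M k) :
    locC n g M i₀ (k + 1) (cechD n g M k x) = dD n g M i₀ k (locC n g M i₀ k x) := by
  funext t
  show locMap M _ _ 1 _ (∑ j : Fin (k + 2), _) = _
  rw [map_sum]
  refine Finset.sum_congr rfl fun j _ => ?_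
  rw [map_zsmul]
  congr 1
  rw [locTrans_eq_locMap]
  rw [locC]
  rw [locMap_comp M _ _ _ 1 1 _ _ 1
    (by rw [pow_one]; exact dvd_mul_of_dvd_right (del_dvd n g t j) _),
    locMap_comp M _ _ _ 1 1 _ _ 1
    (by rw [pow_one]; exact dvd_mul_of_dvd_right (del_dvd n g t j) _)]

end CechSetup2

section CechHomotopy

variable {R : Type u} [CommRing R]
variable (n : ℕ) (g : Fin (n + 1) → R) (M : Type u) [AddCommGroup M] [Module R M]
variable (i₀ : Fin (n + 1))

theorem z_congr {k' : ℕ} (z : DComp n g M i₀ k') {v w : Fin (k' + 1) ↪o Fin (n + 1)}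
    (hvw : v = w) (B : R) (e : ℕ) (h1 : (g i₀ * ∏ j, g (v j)) ∣ B ^ e)
    (h2 : (g i₀ * ∏ j, g (w j)) ∣ B ^ e) :
    locMap M (g i₀ * ∏ j, g (v j)) B e h1 (z v) = locMap M (g i₀ * ∏ j, g (w j)) B e h2 (z w)
    := by subst hvw; rfl

theorem cech_homotopy (k : ℕ) (z : DComp n g M i₀ (k + 1)) (t : Fin (k + 2) ↪o Fin (n + 1)) :
    dD n g M i₀ k (hComp n g M i₀ k z) t
      + hComp n g M i₀ (k + 1) (dD n g M i₀ (k + 1) z) t = z t := by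
  by_cases hB : i₀ ∈ Set.range t
  · -- Case A : i₀ is in the range of t
    obtain ⟨p, hp⟩ := hB
    have hnot : i₀ ∉ Set.range ((Fin.succAboveOrderEmb p).trans t) := by
      rw [range_trans_succAbove, hp]
      exact fun hmem => hmem.2 rfl
    have h2 : hComp n g M i₀ (k + 1) (dD n g M i₀ (k + 1) z) t = 0 := by
      simp only [hComp]
      rw [dif_pos ⟨p, hp⟩]
    rw [h2, add_zero]
    show (∑ j : Fin (k + 2), ((-1 : ℤ) ^ (j : ℕ)) •
      locMap M (g i₀ * ∏ i, g (((Fin.succAboveOrderEmb j).trans t) i)) (g i₀ * ∏ i, g (t i)) 1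
        (by rw [pow_one]; exact mul_dvd_mul_left _ (del_dvd n g t j))
        ((hComp n g M i₀ k z) ((Fin.succAboveOrderEmb j).trans t))) = z t
    rw [Fin.sum_univ_succAbove _ p]
    have hzero : ∀ l : Fin (k + 1),
        (hComp n g M i₀ k z) ((Fin.succAboveOrderEmb (p.succAbove l)).trans t) = 0 := by
      intro l
      have hmem : i₀ ∈ Set.range ((Fin.succAboveOrderEmb (p.succAbove l)).trans t) := by
        obtain ⟨l', hl'⟩ := Fin.exists_succAbove_eq (Ne.symm (Fin.succAbove_ne p l))
        exact ⟨l', by show t ((p.succAbove l).succAbove l') = i₀; rw [hl', hp]⟩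
      simp only [hComp]
      rw [dif_pos hmem]
    rw [Finset.sum_eq_zero (fun l _ => by rw [hzero l, map_zero, zsmul_zero]), add_zero]
    obtain ⟨hins, hpos⟩ := cechIns_unique ((Fin.succAboveOrderEmb p).trans t) i₀ hnot t p hp rfl
    simp only [hComp]
    rw [dif_neg hnot, map_zsmul]
    rw [locMap_comp M _ _ _ 2 1 (ins_dvd n g i₀ _ hnot) _ 1
      (by rw [← hins, pow_one])]
    rw [z_congr n g M i₀ z hins.symm _ 1 _ (by rw [pow_one])]
    rw [locMap_id, ← hpos, smul_smul, ← pow_add, Even.neg_one_pow ⟨(p : ℕ), rfl⟩, one_smul]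
  · -- Case B : i₀ is not in the range of t
    have hq_eq : cechIns t i₀ hB (cechPos t i₀ hB) = i₀ := cechIns_pos t i₀ hB
    have hdel : (Fin.succAboveOrderEmb (cechPos t i₀ hB)).trans (cechIns t i₀ hB) = t :=
      cechIns_delete t i₀ hB
    have hprod_u : (∏ j, g (cechIns t i₀ hB j)) = g i₀ * ∏ j, g (t j) :=
      prod_cechIns n g t i₀ hB
    set u := cechIns t i₀ hB with hu_def
    set q := cechPos t i₀ hB with hq_def
    have hPdvd : ∀ j' : Fin (k + 3),
        (g i₀ * ∏ i, g (((Fin.succAboveOrderEmb j').trans u) i)) ∣ (g i₀ * ∏ i, g (t i)) ^ 2 := by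
      intro j'
      have h := del_dvd n g u j'
      rw [hprod_u] at h
      rw [pow_two]
      exact mul_dvd_mul (dvd_mul_right _ _) h
    -- canonical form of the cross terms
    set W : Fin (k + 2) → LocalizedModule (Submonoid.powers (g i₀ * ∏ i, g (t i))) M :=
      fun l => locMap M (g i₀ * ∏ i, g (((Fin.succAboveOrderEmb (q.succAbove l)).trans u) i))
        (g i₀ * ∏ i, g (t i)) 2 (hPdvd (q.succAbove l))
        (z ((Fin.succAboveOrderEmb (q.succAbove l)).trans u)) with hW_def
    -- second summand
    have e2 : hComp n g M i₀ (k + 1) (dD n g M i₀ (k + 1) z) t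
        = z t + ∑ l : Fin (k + 2),
            ((-1 : ℤ) ^ (q : ℕ)) • (((-1 : ℤ) ^ ((q.succAbove l : Fin (k + 3)) : ℕ)) • W l) := by
      simp only [hComp]
      rw [dif_neg hB]
      show ((-1 : ℤ) ^ (q : ℕ)) • locMap M _ _ 2 (ins_dvd n g i₀ t hB)
        (∑ j' : Fin (k + 3), ((-1 : ℤ) ^ (j' : ℕ)) •
          locMap M (g i₀ * ∏ i, g (((Fin.succAboveOrderEmb j').trans u) i))
            (g i₀ * ∏ i, g (u i)) 1
            (by rw [pow_one]; exact mul_dvd_mul_left _ (del_dvd n g u j'))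
            (z ((Fin.succAboveOrderEmb j').trans u))) = _
      rw [map_sum, ← Finset.sum_zsmul]
      have hterm : ∀ j' : Fin (k + 3),
          ((-1 : ℤ) ^ (q : ℕ)) • locMap M _ _ 2 (ins_dvd n g i₀ t hB)
            (((-1 : ℤ) ^ (j' : ℕ)) •
              locMap M (g i₀ * ∏ i, g (((Fin.succAboveOrderEmb j').trans u) i))
                (g i₀ * ∏ i, g (u i)) 1
                (by rw [pow_one]; exact mul_dvd_mul_left _ (del_dvd n g u j'))
                (z ((Fin.succAboveOrderEmb j').trans u)))
          = ((-1 : ℤ) ^ (q : ℕ)) • (((-1 : ℤ) ^ (j' : ℕ)) •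
              locMap M (g i₀ * ∏ i, g (((Fin.succAboveOrderEmb j').trans u) i))
                (g i₀ * ∏ i, g (t i)) 2 (hPdvd j')
                (z ((Fin.succAboveOrderEmb j').trans u))) := by
        intro j'
        rw [map_zsmul]
        rw [locMap_comp M _ _ _ 1 2 _ (ins_dvd n g i₀ t hB) 2 (hPdvd j')]
      rw [Finset.sum_congr rfl (fun j' _ => hterm j')]
      rw [Fin.sum_univ_succAbove (fun j' => ((-1 : ℤ) ^ (q : ℕ)) • (((-1 : ℤ) ^ (j' : ℕ)) •
              locMap M (g i₀ * ∏ i, g (((Fin.succAboveOrderEmb j').trans u) i))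
                (g i₀ * ∏ i, g (t i)) 2 (hPdvd j')
                (z ((Fin.succAboveOrderEmb j').trans u)))) q]
      congr 1
      rw [z_congr n g M i₀ z hdel _ 2 (hPdvd q)
        (by rw [pow_two]; exact dvd_mul_right _ _)]
      rw [locMap_id, smul_smul, ← pow_add, Even.neg_one_pow ⟨(q : ℕ), rfl⟩, one_smul]
    -- first summand
    have e1 : dD n g M i₀ k (hComp n g M i₀ k z) t
        = ∑ l : Fin (k + 2),
            -(((-1 : ℤ) ^ (q : ℕ)) • (((-1 : ℤ) ^ ((q.succAbove l : Fin (k + 3)) : ℕ)) • W l))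
        := by
      show (∑ l : Fin (k + 2), ((-1 : ℤ) ^ (l : ℕ)) •
        locMap M (g i₀ * ∏ i, g (((Fin.succAboveOrderEmb l).trans t) i)) (g i₀ * ∏ i, g (t i)) 1
          (by rw [pow_one]; exact mul_dvd_mul_left _ (del_dvd n g t l))
          ((hComp n g M i₀ k z) ((Fin.succAboveOrderEmb l).trans t))) = _
      refine Finset.sum_congr rfl (fun l _ => ?_)
      have hnot_l : i₀ ∉ Set.range ((Fin.succAboveOrderEmb l).trans t) := by
        rw [range_trans_succAbove]
        exact fun hmem => hB hmem.1
      have hql : q ≠ q.succAbove l := (Fin.succAbove_ne q l).symm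
      obtain ⟨c, hc⟩ := Fin.exists_succAbove_eq (Ne.symm hql).symm
      have heq_v : ((Fin.succAboveOrderEmb (q.succAbove l)).trans u) c = i₀ := by
        show u ((q.succAbove l).succAbove c) = i₀
        rw [hc, hq_eq]
      have ht_range : Set.range t = Set.range u \ {i₀} := by
        rw [← hdel, range_trans_succAbove, hq_eq]
      have ht_l : t l = u (q.succAbove l) := by rw [← hdel]; rfl
      have hd_v : (Fin.succAboveOrderEmb c).trans ((Fin.succAboveOrderEmb (q.succAbove l)).trans u)
          = (Fin.succAboveOrderEmb l).trans t := by
        apply orderEmb_range_ext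
        rw [range_trans_succAbove, range_trans_succAbove, heq_v,
          range_trans_succAbove, ht_range, ht_l, Set.diff_diff_comm]
      obtain ⟨hins_l, hpos_l⟩ := cechIns_unique ((Fin.succAboveOrderEmb l).trans t) i₀ hnot_l
        ((Fin.succAboveOrderEmb (q.succAbove l)).trans u) c heq_v hd_v
      simp only [hComp]
      rw [dif_neg hnot_l, map_zsmul]
      rw [locMap_comp M _ _ _ 2 1 (ins_dvd n g i₀ _ hnot_l) _ 2
        (by rw [← hins_l]; exact hPdvd (q.succAbove l))]
      rw [z_congr n g M i₀ z hins_l.symm _ 2 _ (hPdvd (q.succAbove l))]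
      rw [← hpos_l]
      have coeff_eq : ((-1 : ℤ) ^ (l : ℕ)) * ((-1 : ℤ) ^ (c : ℕ))
          = -(((-1 : ℤ) ^ (q : ℕ)) * ((-1 : ℤ) ^ ((q.succAbove l : Fin (k + 3)) : ℕ))) := by
        have hodd := cechParity_odd q l c hc
        rw [← pow_add, ← pow_add]
        apply neg_one_pow_odd_sum
        rw [Nat.odd_iff] at hodd ⊢
        omega
      rw [smul_smul, coeff_eq, neg_smul, smul_smul]
    rw [e1, e2, Finset.sum_neg_distrib]
    abel
end CechHomotopy

section CechElements

variable {R : Type u} [CommRing R]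
variable (M : Type u) [AddCommGroup M] [Module R M]

instance finiteOrderEmb (a b : ℕ) : Finite (Fin a ↪o Fin b) :=
  Finite.of_injective (fun f => (f : Fin a → Fin b))
    (DFunLike.coe_injective (F := Fin a ↪o Fin b))

theorem smul_injective' (b r : R)
    (hu : IsUnit (algebraMap R (Module.End R (LocalizedModule (Submonoid.powers b) M)) r))
    {x y : LocalizedModule (Submonoid.powers b) M} (h : r • x = r • y) : x = y := by
  have hb := (Module.End.isUnit_iff _).mp hu
  apply hb.injective
  simpa [Module.algebraMap_end_apply] using h

theorem loc_approx (a c : R) (w : LocalizedModule (Submonoid.powers (c * a)) M) :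
    ∃ (K : ℕ) (x : LocalizedModule (Submonoid.powers a) M),
      locMap M a (c * a) 1 (by rw [pow_one]; exact dvd_mul_left a c) x = c ^ K • w := by
  induction w using LocalizedModule.induction_on with
  | _ m s =>
    obtain ⟨r, hr⟩ := s.2
    refine ⟨r, LocalizedModule.mk m ⟨a ^ r, ⟨r, rfl⟩⟩, ?_⟩
    apply smul_injective' M (c * a) (a ^ r)
      (cechAuxIsUnit' M a (c * a) 1 (by rw [pow_one]; exact dvd_mul_left a c) ⟨a ^ r, ⟨r, rfl⟩⟩)
    rw [← map_smul]
    have h1 : (a ^ r) • LocalizedModule.mk m (⟨a ^ r, ⟨r, rfl⟩⟩ : Submonoid.powers a)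
        = LocalizedModule.mk m 1 := by
      rw [LocalizedModule.smul'_mk]
      exact LocalizedModule.mk_cancel (⟨a ^ r, ⟨r, rfl⟩⟩ : Submonoid.powers a) m
    rw [h1, locMap_mk_one]
    have hr' : (c * a) ^ r = (s : R) := hr
    have h2 : (s : R) • LocalizedModule.mk m s = LocalizedModule.mk m 1 := by
      rw [LocalizedModule.smul'_mk]
      exact LocalizedModule.mk_cancel s m
    rw [smul_comm, smul_smul, ← mul_pow, hr', h2]

theorem loc_zero (a c : R) (x : LocalizedModule (Submonoid.powers a) M)
    (h : locMap M a (c * a) 1 (by rw [pow_one]; exact dvd_mul_left a c) x = 0) :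
    ∃ K : ℕ, c ^ K • x = 0 := by
  induction x using LocalizedModule.induction_on with
  | _ m s =>
    obtain ⟨r, hr⟩ := s.2
    have hr' : a ^ r = (s : R) := hr
    have h1 : (a ^ r) • LocalizedModule.mk m s = LocalizedModule.mk m 1 := by
      rw [LocalizedModule.smul'_mk, hr']
      exact LocalizedModule.mk_cancel s m
    have h2 : (LocalizedModule.mk m 1 : LocalizedModule (Submonoid.powers (c * a)) M) = 0 := by
      rw [← locMap_mk_one M a (c * a) 1 (by rw [pow_one]; exact dvd_mul_left a c) m, ← h1,
        map_smul, h, smul_zero]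
    rw [show (LocalizedModule.mk m 1 : LocalizedModule (Submonoid.powers (c * a)) M)
      = LocalizedModule.mk m (1 : Submonoid.powers (c * a)) from rfl, mk_zero_iff] at h2
    obtain ⟨u, hu⟩ := h2
    obtain ⟨e, he⟩ := u.2
    refine ⟨e, ?_⟩
    have he' : (c * a) ^ e = (u : R) := he
    rw [LocalizedModule.smul'_mk, mk_zero_iff]
    refine ⟨⟨a ^ e, ⟨e, rfl⟩⟩, ?_⟩
    show (a ^ e) • c ^ e • m = 0
    rw [smul_smul, ← mul_pow, mul_comm a c, he']
    exact hu

theorem loc_top_approx (c : R) (w : LocalizedModule (Submonoid.powers c) M) :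
    ∃ (K : ℕ) (m0 : M), c ^ K • w = LocalizedModule.mk m0 1 := by
  induction w using LocalizedModule.induction_on with
  | _ m s =>
    obtain ⟨r, hr⟩ := s.2
    refine ⟨r, m, ?_⟩
    have hr' : c ^ r = (s : R) := hr
    rw [LocalizedModule.smul'_mk, hr']
    exact LocalizedModule.mk_cancel s m

end CechElements

section CechLinear

variable {R : Type u} [CommRing R]
variable (n : ℕ) (g : Fin (n + 1) → R) (M : Type u) [AddCommGroup M] [Module R M]

theorem cechD_add (k : ℕ) (x y : CechComponent n g M k) :
    cechD n g M k (x + y) = cechD n g M k x + cechD n g M k y := by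
  funext t
  simp only [cechD, Pi.add_apply]
  rw [← Finset.sum_add_distrib]
  exact Finset.sum_congr rfl fun j _ => by rw [map_add, zsmul_add]

theorem cechD_smul (k : ℕ) (r : R) (x : CechComponent n g M k) :
    cechD n g M k (r • x) = r • cechD n g M k x := by
  funext t
  simp only [cechD, Pi.smul_apply]
  rw [Finset.smul_sum]
  exact Finset.sum_congr rfl fun j _ => by rw [map_smul]; exact smul_comm _ r _

noncomputable def cechEpsL : M →ₗ[R] CechComponent n g M 0 where
  toFun := cechEps n g M
  map_add' := by
    intro a b
    funext s
    exact map_add (LocalizedModule.mkLinearMap _ M) a b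
  map_smul' := by
    intro r a
    funext s
    exact map_smul (LocalizedModule.mkLinearMap _ M) r a

noncomputable def cechDL (k : ℕ) : CechComponent n g M k →ₗ[R] CechComponent n g M (k + 1)
    where
  toFun := cechD n g M k
  map_add' := cechD_add n g M k
  map_smul' := cechD_smul n g M k

variable (i₀ : Fin (n + 1))

theorem locC_sub (k : ℕ) (x y : CechComponent n g M k) :
    locC n g M i₀ k (x - y) = locC n g M i₀ k x - locC n g M i₀ k y := by
  funext s
  show locMap M _ _ 1 _ ((x - y) s) = _
  rw [Pi.sub_apply, map_sub]
  rfl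

theorem locC_smul (k : ℕ) (r : R) (x : CechComponent n g M k) :
    locC n g M i₀ k (r • x) = r • locC n g M i₀ k x := by
  funext s
  show locMap M _ _ 1 _ ((r • x) s) = _
  rw [Pi.smul_apply, map_smul]
  rfl

theorem dD_smul (k : ℕ) (r : R) (x : DComp n g M i₀ k) :
    dD n g M i₀ k (r • x) = r • dD n g M i₀ k x := by
  funext t
  simp only [dD, Pi.smul_apply]
  rw [Finset.smul_sum]
  exact Finset.sum_congr rfl fun j _ => by rw [map_smul]; exact smul_comm _ r _

theorem hComp_zero (k : ℕ) : hComp n g M i₀ k 0 = 0 := by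
  funext s
  show (if hi : i₀ ∈ Set.range s then _ else _) = 0
  split
  · rfl
  · rw [Pi.zero_apply, map_zero, zsmul_zero]

theorem locC_approx (k : ℕ) (w : DComp n g M i₀ k) :
    ∃ (K : ℕ) (x : CechComponent n g M k), locC n g M i₀ k x = (g i₀) ^ K • w := by
  classical
  haveI : Fintype (Fin (k + 1) ↪o Fin (n + 1)) := Fintype.ofFinite _
  choose Ks xs hxs using fun s : Fin (k + 1) ↪o Fin (n + 1) =>
    loc_approx M (∏ j, g (s j)) (g i₀) (w s)
  refine ⟨Finset.univ.sup Ks, fun s => (g i₀) ^ (Finset.univ.sup Ks - Ks s) • xs s, ?_⟩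
  funext s
  show locMap M _ _ 1 _ _ = _
  rw [map_smul, hxs s, Pi.smul_apply, smul_smul, ← pow_add]
  congr 2
  have := Finset.le_sup (f := Ks) (Finset.mem_univ s)
  omega

theorem locC_zero (k : ℕ) (x : CechComponent n g M k)
    (h : locC n g M i₀ k x = 0) :
    ∃ K : ℕ, (g i₀) ^ K • x = 0 := by
  classical
  haveI : Fintype (Fin (k + 1) ↪o Fin (n + 1)) := Fintype.ofFinite _
  have h' : ∀ s : Fin (k + 1) ↪o Fin (n + 1), ∃ K : ℕ, (g i₀) ^ K • x s = 0 := by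
    intro s
    apply loc_zero M (∏ j, g (s j)) (g i₀) (x s)
    exact congrFun h s
  choose Ks hKs using h'
  refine ⟨Finset.univ.sup Ks, ?_⟩
  funext s
  rw [Pi.smul_apply, Pi.zero_apply]
  have : (g i₀) ^ (Finset.univ.sup Ks) = (g i₀) ^ (Finset.univ.sup Ks - Ks s) * (g i₀) ^ (Ks s)
      := by
    rw [← pow_add]
    congr 1
    have := Finset.le_sup (f := Ks) (Finset.mem_univ s)
    omega
  rw [this, mul_smul, hKs s, smul_zero]

theorem cech_patch {N : Type u} [AddCommGroup N] [Module R N]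
    (hunit : Ideal.span (Set.range g) = ⊤) (p : Submodule R N) (x : N)
    (h : ∀ i : Fin (n + 1), ∃ K : ℕ, (g i) ^ K • x ∈ p) : x ∈ p := by
  classical
  choose K hK using h
  set E := Finset.univ.sup K with hE_def
  have hE : ∀ i, (g i) ^ E • x ∈ p := by
    intro i
    have h1 : (g i) ^ E = (g i) ^ (E - K i) * (g i) ^ (K i) := by
      rw [← pow_add]
      congr 1
      have := Finset.le_sup (f := K) (Finset.mem_univ i)
      omega
    rw [h1, mul_smul]
    exact p.smul_mem _ (hK i)
  have hspan : Ideal.span ((fun r : R => r ^ E) '' Set.range g) = ⊤ :=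
    Ideal.span_pow_eq_top _ hunit E
  let I : Ideal R :=
    { carrier := {r : R | r • x ∈ p}
      add_mem' := fun ha hb => by simpa [add_smul] using p.add_mem ha hb
      zero_mem' := by simp [p.zero_mem]
      smul_mem' := fun c r hr => by
        simp only [Set.mem_setOf_eq, smul_eq_mul, mul_smul] at hr ⊢
        exact p.smul_mem c hr }
  have hsub : (fun r : R => r ^ E) '' Set.range g ⊆ I := by
    rintro _ ⟨_, ⟨i, rfl⟩, rfl⟩
    exact hE i
  have h1 : (1 : R) ∈ I := by
    have := Ideal.span_le.mpr hsub
    rw [hspan] at this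
    exact this Submodule.mem_top
  have h2 : (1 : R) • x ∈ p := h1
  rwa [one_smul] at h2

end CechLinear

section CechDD

variable {R : Type u} [CommRing R]
variable (n : ℕ) (g : Fin (n + 1) → R) (M : Type u) [AddCommGroup M] [Module R M]

theorem cechParity' {m : ℕ} (a : Fin (m + 1)) (l : Fin m) (c : Fin m)
    (h : (a.succAbove l).succAbove c = a) :
    ((-1 : ℤ) ^ (a : ℕ)) * ((-1 : ℤ) ^ (l : ℕ)) =
      -(((-1 : ℤ) ^ ((a.succAbove l : Fin (m + 1)) : ℕ)) * ((-1 : ℤ) ^ (c : ℕ))) := by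
  rw [← pow_add, ← pow_add]
  exact neg_one_pow_odd_sum (cechParity_odd a l c h)

theorem y_congr {k' : ℕ} (y : CechComponent n g M k') {v w : Fin (k' + 1) ↪o Fin (n + 1)}
    (hvw : v = w) (B : R) (e : ℕ) (h1 : (∏ j, g (v j)) ∣ B ^ e)
    (h2 : (∏ j, g (w j)) ∣ B ^ e) :
    locMap M (∏ j, g (v j)) B e h1 (y v) = locMap M (∏ j, g (w j)) B e h2 (y w) := by
  subst hvw; rfl

theorem cechD_eps (m : M) : cechD n g M 0 (cechEps n g M m) = 0 := by
  funext t
  simp only [cechD, cechEps, Pi.zero_apply, locTrans_eq_locMap]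
  rw [Fin.sum_univ_two]
  simp only [LocalizedModule.mkLinearMap_apply, locMap_mk_one, Fin.val_zero, pow_zero, one_smul,
    Fin.val_one, pow_one, neg_smul, one_smul]
  exact add_neg_cancel _

theorem cechD_cechD (k : ℕ) (y : CechComponent n g M k) :
    cechD n g M (k + 1) (cechD n g M k y) = 0 := by
  classical
  funext t
  simp only [cechD, Pi.zero_apply, locTrans_eq_locMap]
  have hdvd : ∀ (j : Fin (k + 3)) (l : Fin (k + 2)),
      (∏ i, g (((Fin.succAboveOrderEmb l).trans ((Fin.succAboveOrderEmb j).trans t)) i))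
        ∣ (∏ i, g (t i)) ^ 1 := fun j l => by
    rw [pow_one]
    exact dvd_trans (del_dvd n g ((Fin.succAboveOrderEmb j).trans t) l) (del_dvd n g t j)
  set F : Fin (k + 3) × Fin (k + 2) →
      LocalizedModule (Submonoid.powers (∏ i, g (t i))) M := fun p =>
    (((-1 : ℤ) ^ ((p.1 : Fin (k + 3)) : ℕ)) * ((-1 : ℤ) ^ ((p.2 : Fin (k + 2)) : ℕ))) •
      locMap M
        (∏ i, g (((Fin.succAboveOrderEmb p.2).trans ((Fin.succAboveOrderEmb p.1).trans t)) i))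
        (∏ i, g (t i)) 1 (hdvd p.1 p.2)
        (y ((Fin.succAboveOrderEmb p.2).trans ((Fin.succAboveOrderEmb p.1).trans t))) with hF
  have hstep : ∀ j : Fin (k + 3),
      ((-1 : ℤ) ^ ((j : Fin (k + 3)) : ℕ)) • locMap M
        (∏ i, g (((Fin.succAboveOrderEmb j).trans t) i)) (∏ i, g (t i)) 1
        (by rw [pow_one]; exact del_dvd n g t j)
        (∑ l : Fin (k + 2), ((-1 : ℤ) ^ ((l : Fin (k + 2)) : ℕ)) • locMap M
          (∏ i, g (((Fin.succAboveOrderEmb l).trans ((Fin.succAboveOrderEmb j).trans t)) i))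
          (∏ i, g (((Fin.succAboveOrderEmb j).trans t) i)) 1
          (by rw [pow_one]; exact del_dvd n g ((Fin.succAboveOrderEmb j).trans t) l)
          (y ((Fin.succAboveOrderEmb l).trans ((Fin.succAboveOrderEmb j).trans t))))
      = ∑ l : Fin (k + 2), F (j, l) := by
    intro j
    rw [map_sum, ← Finset.sum_zsmul]
    refine Finset.sum_congr rfl fun l _ => ?_
    rw [map_zsmul, locMap_comp M _ _ _ 1 1 _ _ 1 (hdvd j l), smul_smul]
  rw [Finset.sum_congr rfl (fun j _ => hstep j), ← Finset.sum_product]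
  set cc : Fin (k + 3) × Fin (k + 2) → Fin (k + 2) := fun p =>
    Classical.choose (Fin.exists_succAbove_eq ((Fin.succAbove_ne p.1 p.2).symm)) with hcc_def
  have hcc : ∀ p : Fin (k + 3) × Fin (k + 2), (p.1.succAbove p.2).succAbove (cc p) = p.1 :=
    fun p => Classical.choose_spec (Fin.exists_succAbove_eq ((Fin.succAbove_ne p.1 p.2).symm))
  set φ : Fin (k + 3) × Fin (k + 2) → Fin (k + 3) × Fin (k + 2) := fun p =>
    (p.1.succAbove p.2, cc p) with hφ
  apply Finset.sum_ninvolution φ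
  · -- cancellation
    intro p
    have hemb : (Fin.succAboveOrderEmb (cc p)).trans
          ((Fin.succAboveOrderEmb (p.1.succAbove p.2)).trans t)
        = (Fin.succAboveOrderEmb p.2).trans ((Fin.succAboveOrderEmb p.1).trans t) := by
      apply orderEmb_range_ext
      have h1 : ((Fin.succAboveOrderEmb (p.1.succAbove p.2)).trans t) (cc p) = t p.1 := by
        show t ((p.1.succAbove p.2).succAbove (cc p)) = t p.1
        rw [hcc p]
      have h2 : ((Fin.succAboveOrderEmb p.1).trans t) p.2 = t (p.1.succAbove p.2) := rfl
      rw [range_trans_succAbove, range_trans_succAbove, range_trans_succAbove,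
        range_trans_succAbove, h1, h2, Set.diff_diff_comm]
    show F p + F (φ p) = 0
    rw [hF]
    simp only []
    rw [y_congr n g M y hemb _ 1 (hdvd (φ p).1 (φ p).2) (hdvd p.1 p.2)]
    rw [← add_smul]
    have hco : ((-1 : ℤ) ^ ((p.1 : Fin (k + 3)) : ℕ)) * ((-1 : ℤ) ^ ((p.2 : Fin (k + 2)) : ℕ))
        + ((-1 : ℤ) ^ ((p.1.succAbove p.2 : Fin (k + 3)) : ℕ)) *
          ((-1 : ℤ) ^ ((cc p : Fin (k + 2)) : ℕ)) = 0 := by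
      rw [cechParity' p.1 p.2 (cc p) (hcc p)]
      exact neg_add_cancel _
    rw [hco, zero_smul]
  · -- no fixed points
    intro p _ hφp
    exact Fin.succAbove_ne p.1 p.2 (congrArg Prod.fst hφp)
  · -- membership
    intro p
    exact Finset.mem_product.mpr ⟨Finset.mem_univ _, Finset.mem_univ _⟩
  · -- involution
    intro p
    have h1 : (φ p).1.succAbove (φ p).2 = p.1 := hcc p
    have h2 : ((φ p).1.succAbove (φ p).2).succAbove (cc (φ p)) = (φ p).1 := hcc (φ p)
    rw [h1] at h2
    have h3 : cc (φ p) = p.2 := Fin.succAbove_right_injective h2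
    show ((φ p).1.succAbove (φ p).2, cc (φ p)) = p
    rw [h1, h3]

end CechDD

section CechMain

variable {R : Type u} [CommRing R]
variable (n : ℕ) (g : Fin (n + 1) → R) (M : Type u) [AddCommGroup M] [Module R M]

/-- The singleton order embedding `Fin 1 ↪o Fin (n+1)` hitting `i₀`. -/
noncomputable def sing (i₀ : Fin (n + 1)) : Fin 1 ↪o Fin (n + 1) :=
  Finset.orderEmbOfFin {i₀} (Finset.card_singleton i₀)

theorem sing_apply (i₀ : Fin (n + 1)) (j : Fin 1) : sing n i₀ j = i₀ :=
  Finset.orderEmbOfFin_singleton i₀ j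

theorem range_sing (i₀ : Fin (n + 1)) : Set.range (sing n i₀) = {i₀} := by
  rw [sing, Finset.range_orderEmbOfFin]
  simp

theorem prod_sing (i₀ : Fin (n + 1)) : (∏ j, g (sing n i₀ j)) = g i₀ := by
  rw [Fin.prod_univ_one]
  exact congrArg g (sing_apply n i₀ 0)

theorem fin1_eq_sing (i₀ : Fin (n + 1)) (e : Fin 1 ↪o Fin (n + 1)) (he : e 0 = i₀) :
    e = sing n i₀ := by
  apply orderEmb_range_ext
  rw [range_sing]
  ext b
  constructor
  · rintro ⟨a, rfl⟩
    rw [Subsingleton.elim a 0, he]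
    rfl
  · rintro rfl
    exact ⟨0, he⟩

theorem locC_map_zero (i₀ : Fin (n + 1)) (k : ℕ) : locC n g M i₀ k 0 = 0 := by
  funext s
  show locMap M _ _ 1 _ ((0 : CechComponent n g M k) s) = 0
  rw [Pi.zero_apply, map_zero]

theorem eps_zero_pow (i₀ : Fin (n + 1)) (m : M) (h : cechEps n g M m = 0) :
    ∃ K : ℕ, (g i₀) ^ K • m = 0 := by
  have h1 := congrFun h (sing n i₀)
  rw [Pi.zero_apply] at h1
  have h2 : (LocalizedModule.mk m (1 : Submonoid.powers (∏ j, g (sing n i₀ j)))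
      : LocalizedModule (Submonoid.powers (∏ j, g (sing n i₀ j))) M) = 0 := h1
  rw [mk_zero_iff] at h2
  obtain ⟨u, hu⟩ := h2
  obtain ⟨r, hr⟩ := u.2
  have hr' : (∏ j, g (sing n i₀ j)) ^ r = (u : R) := hr
  refine ⟨r, ?_⟩
  rw [← prod_sing n g i₀, hr']
  exact hu

theorem eps_surj_pow (i₀ : Fin (n + 1)) (x : CechComponent n g M 0)
    (hx : cechD n g M 0 x = 0) :
    ∃ (K : ℕ) (m0 : M), (g i₀) ^ K • x = cechEps n g M m0 := by
  classical
  have hσd : (∏ j, g (sing n i₀ j)) ∣ (g i₀) ^ 1 := by rw [pow_one, prod_sing]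
  set v := locMap M (∏ j, g (sing n i₀ j)) (g i₀) 1 hσd (x (sing n i₀)) with hv
  have hclaim : ∀ s : Fin 1 ↪o Fin (n + 1),
      locC n g M i₀ 0 x s = locMap M (g i₀) (g i₀ * ∏ j, g (s j)) 1
        (by rw [pow_one]; exact dvd_mul_right _ _) v := by
    intro s
    by_cases hs : i₀ ∈ Set.range s
    · -- s is the singleton at i₀
      obtain ⟨j, hj⟩ := hs
      have hs0 : s = sing n i₀ := fin1_eq_sing n i₀ s (by rw [Subsingleton.elim (0 : Fin 1) j, hj])
      rw [hs0]
      show locMap M (∏ j, g (sing n i₀ j)) (g i₀ * ∏ j, g (sing n i₀ j)) 1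
        (by rw [pow_one]; exact dvd_mul_left _ _) (x (sing n i₀)) = _
      rw [hv, locMap_comp M (∏ j, g (sing n i₀ j)) (g i₀) (g i₀ * ∏ j, g (sing n i₀ j)) 1 1 hσd
        (by rw [pow_one]; exact dvd_mul_right _ _) 1 (by rw [pow_one]; exact dvd_mul_left _ _)]
    · -- use the cocycle condition over the pair {i₀, s 0}
      have hτρ : cechIns s i₀ hs (cechPos s i₀ hs) = i₀ := cechIns_pos s i₀ hs
      have hτdel : (Fin.succAboveOrderEmb (cechPos s i₀ hs)).trans (cechIns s i₀ hs) = s :=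
        cechIns_delete s i₀ hs
      have hτprod : (∏ j, g (cechIns s i₀ hs j)) = g i₀ * ∏ j, g (s j) :=
        prod_cechIns n g s i₀ hs
      set τ := cechIns s i₀ hs with hτ
      set ρ := cechPos s i₀ hs with hρ
      have hA : (∏ j, g (s j)) ∣ (∏ i, g (τ i)) ^ 1 := by
        rw [pow_one, hτprod]; exact dvd_mul_left _ _
      have hB : (∏ j, g (sing n i₀ j)) ∣ (∏ i, g (τ i)) ^ 1 := by
        rw [pow_one, hτprod, prod_sing]; exact dvd_mul_right _ _
      have hxτ := congrFun hx τ
      simp only [cechD, Pi.zero_apply, locTrans_eq_locMap] at hxτ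
      rw [Fin.sum_univ_two] at hxτ
      simp only [Fin.val_zero, pow_zero, one_smul, Fin.val_one, pow_one, neg_smul] at hxτ
      have heq := add_neg_eq_zero.mp hxτ
      have hρcase : ρ = 0 ∨ ρ = 1 := by
        have hval : (ρ : ℕ) = 0 ∨ (ρ : ℕ) = 1 := by omega
        rcases hval with h | h
        · exact Or.inl (Fin.ext h)
        · exact Or.inr (Fin.ext h)
      have key : locMap M (∏ j, g (s j)) (∏ i, g (τ i)) 1 hA (x s)
          = locMap M (∏ j, g (sing n i₀ j)) (∏ i, g (τ i)) 1 hB (x (sing n i₀)) := by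
        rcases hρcase with hρ0 | hρ1
        · have hδ0 : (Fin.succAboveOrderEmb (0 : Fin 2)).trans τ = s := by
            rw [← hρ0]; exact hτdel
          have hδ1 : (Fin.succAboveOrderEmb (1 : Fin 2)).trans τ = sing n i₀ := by
            apply fin1_eq_sing
            show τ ((1 : Fin 2).succAbove 0) = i₀
            have h01 : (1 : Fin 2).succAbove 0 = 0 := by decide
            rw [h01, ← hρ0]
            exact hτρ
          calc locMap M (∏ j, g (s j)) (∏ i, g (τ i)) 1 hA (x s)
              = locMap M (∏ i', g (((Fin.succAboveOrderEmb (0 : Fin 2)).trans τ) i'))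
                (∏ i, g (τ i)) 1 (by rw [pow_one]; exact del_dvd n g τ 0)
                (x ((Fin.succAboveOrderEmb (0 : Fin 2)).trans τ)) :=
                (y_congr n g M x hδ0 _ 1 _ hA).symm
            _ = locMap M (∏ i', g (((Fin.succAboveOrderEmb (1 : Fin 2)).trans τ) i'))
                (∏ i, g (τ i)) 1 (by rw [pow_one]; exact del_dvd n g τ 1)
                (x ((Fin.succAboveOrderEmb (1 : Fin 2)).trans τ)) := heq
            _ = locMap M (∏ j, g (sing n i₀ j)) (∏ i, g (τ i)) 1 hB (x (sing n i₀)) :=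
                y_congr n g M x hδ1 _ 1 _ hB
        · have hδ1 : (Fin.succAboveOrderEmb (1 : Fin 2)).trans τ = s := by
            rw [← hρ1]; exact hτdel
          have hδ0 : (Fin.succAboveOrderEmb (0 : Fin 2)).trans τ = sing n i₀ := by
            apply fin1_eq_sing
            show τ ((0 : Fin 2).succAbove 0) = i₀
            have h01 : (0 : Fin 2).succAbove 0 = 1 := by decide
            rw [h01, ← hρ1]
            exact hτρ
          calc locMap M (∏ j, g (s j)) (∏ i, g (τ i)) 1 hA (x s)
              = locMap M (∏ i', g (((Fin.succAboveOrderEmb (1 : Fin 2)).trans τ) i'))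
                (∏ i, g (τ i)) 1 (by rw [pow_one]; exact del_dvd n g τ 1)
                (x ((Fin.succAboveOrderEmb (1 : Fin 2)).trans τ)) :=
                (y_congr n g M x hδ1 _ 1 _ hA).symm
            _ = locMap M (∏ i', g (((Fin.succAboveOrderEmb (0 : Fin 2)).trans τ) i'))
                (∏ i, g (τ i)) 1 (by rw [pow_one]; exact del_dvd n g τ 0)
                (x ((Fin.succAboveOrderEmb (0 : Fin 2)).trans τ)) := heq.symm
            _ = locMap M (∏ j, g (sing n i₀ j)) (∏ i, g (τ i)) 1 hB (x (sing n i₀)) :=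
                y_congr n g M x hδ0 _ 1 _ hB
      have hτB : (∏ i, g (τ i)) ∣ (g i₀ * ∏ j, g (s j)) ^ 1 := by
        rw [pow_one, hτprod]
      have hComb : (∏ j, g (sing n i₀ j)) ∣ (g i₀ * ∏ j, g (s j)) ^ 1 := by
        rw [pow_one, prod_sing]; exact dvd_mul_right _ _
      show locMap M (∏ j, g (s j)) (g i₀ * ∏ j, g (s j)) 1
        (by rw [pow_one]; exact dvd_mul_left _ _) (x s) = _
      rw [← locMap_comp M (∏ j, g (s j)) (∏ i, g (τ i)) (g i₀ * ∏ j, g (s j)) 1 1 hA hτB 1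
        (by rw [pow_one]; exact dvd_mul_left _ _)]
      rw [key]
      rw [locMap_comp M (∏ j, g (sing n i₀ j)) (∏ i, g (τ i)) (g i₀ * ∏ j, g (s j)) 1 1 hB hτB
        1 hComb]
      rw [hv, locMap_comp M (∏ j, g (sing n i₀ j)) (g i₀) (g i₀ * ∏ j, g (s j)) 1 1 hσd
        (by rw [pow_one]; exact dvd_mul_right _ _) 1 hComb]
  obtain ⟨K, m0, hKm⟩ := loc_top_approx M (g i₀) v
  have hzero : locC n g M i₀ 0 ((g i₀) ^ K • x - cechEps n g M m0) = 0 := by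
    rw [locC_sub, locC_smul]
    funext s
    rw [Pi.sub_apply, Pi.smul_apply, hclaim s, ← map_smul, hKm, locMap_mk_one]
    have hm0 : locC n g M i₀ 0 (cechEps n g M m0) s = LocalizedModule.mk m0 1 :=
      locMap_mk_one M _ _ 1 _ m0
    rw [hm0, sub_self]
    rfl
  obtain ⟨K', hK'⟩ := locC_zero n g M i₀ 0 _ hzero
  rw [smul_sub, sub_eq_zero, smul_smul, ← pow_add] at hK'
  refine ⟨K' + K, (g i₀) ^ K' • m0, ?_⟩
  rw [hK']
  exact ((cechEpsL n g M).map_smul _ m0).symm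

theorem d_surj_pow (i₀ : Fin (n + 1)) (k : ℕ) (x : CechComponent n g M (k + 1))
    (hx : cechD n g M (k + 1) x = 0) :
    ∃ (K : ℕ) (y : CechComponent n g M k), (g i₀) ^ K • x = cechD n g M k y := by
  classical
  have hz : dD n g M i₀ (k + 1) (locC n g M i₀ (k + 1) x) = 0 := by
    rw [← locC_cechD, hx, locC_map_zero]
  have hd : dD n g M i₀ k (hComp n g M i₀ k (locC n g M i₀ (k + 1) x))
      = locC n g M i₀ (k + 1) x := by
    funext t
    have h1 := cech_homotopy n g M i₀ k (locC n g M i₀ (k + 1) x) t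
    rwa [hz, hComp_zero, Pi.zero_apply, add_zero] at h1
  obtain ⟨K, c, hc⟩ := locC_approx n g M i₀ k (hComp n g M i₀ k (locC n g M i₀ (k + 1) x))
  have h2 : locC n g M i₀ (k + 1) ((g i₀) ^ K • x - cechD n g M k c) = 0 := by
    rw [locC_sub, locC_smul, locC_cechD, hc, dD_smul, hd, sub_self]
  obtain ⟨K', hK'⟩ := locC_zero n g M i₀ (k + 1) _ h2
  rw [smul_sub, sub_eq_zero, smul_smul, ← pow_add] at hK'
  refine ⟨K' + K, (g i₀) ^ K' • c, ?_⟩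
  rw [hK']
  exact (cechD_smul n g M k _ c).symm

end CechMain


/-- Let `R` be a commutative ring, `g₀, …, g_n ∈ R` elements generating the unit ideal, and
`M` any `R`-module.  Then the extended ordered Čech complex
`0 → M → ∏ᵢ M_{gᵢ} → ∏_{i<j} M_{gᵢgⱼ} → ⋯ → M_{g₀⋯g_n} → 0` is exact: the augmentation is
injective, and at each degree the kernel of the differential is the image of the previous
map. -/
theorem stmt_5 {R : Type u} [CommRing R] (n : ℕ) (g : Fin (n + 1) → R)
    (hunit : Ideal.span (Set.range g) = ⊤)
    (M : Type u) [AddCommGroup M] [Module R M] :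
    Function.Injective (cechEps n g M) ∧
    (∀ x : CechComponent n g M 0, cechD n g M 0 x = 0 ↔ ∃ m : M, cechEps n g M m = x) ∧
    (∀ (k : ℕ) (x : CechComponent n g M (k + 1)),
      cechD n g M (k + 1) x = 0 ↔ ∃ y : CechComponent n g M k, cechD n g M k y = x) := by
  refine ⟨?_, fun x => ⟨fun hx => ?_, ?_⟩, fun k x => ⟨fun hx => ?_, ?_⟩⟩
  · -- injectivity
    intro a b hab
    have hsub : cechEps n g M (a - b) = 0 := by
      show cechEpsL n g M (a - b) = 0
      rw [map_sub]
      show cechEps n g M a - cechEps n g M b = 0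
      rw [hab, sub_self]
    have hmem : a - b ∈ (⊥ : Submodule R M) := by
      apply cech_patch n g hunit
      intro i
      obtain ⟨K, hK⟩ := eps_zero_pow n g M i (a - b) hsub
      exact ⟨K, by rw [hK]; exact Submodule.zero_mem ⊥⟩
    rw [Submodule.mem_bot] at hmem
    exact sub_eq_zero.mp hmem
  · -- degree 0, forward
    have hmem : x ∈ LinearMap.range (cechEpsL n g M) := by
      apply cech_patch n g hunit
      intro i
      obtain ⟨K, m0, hK⟩ := eps_surj_pow n g M i x hx
      exact ⟨K, ⟨m0, hK.symm⟩⟩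
    obtain ⟨m, hm⟩ := hmem
    exact ⟨m, hm⟩
  · -- degree 0, backward
    rintro ⟨m, rfl⟩
    exact cechD_eps n g M m
  · -- higher degrees, forward
    have hmem : x ∈ LinearMap.range (cechDL n g M k) := by
      apply cech_patch n g hunit
      intro i
      obtain ⟨K, y, hK⟩ := d_surj_pow n g M i k x hx
      exact ⟨K, ⟨y, hK.symm⟩⟩
    obtain ⟨y, hy⟩ := hmem
    exact ⟨y, hy⟩
  · -- higher degrees, backward
    rintro ⟨y, rfl⟩
    exact cechD_cechD n g M k y
end

section
/- Let k be a field, A a finite-dimensional associative k-algebra, I an injective A-module, and l any field extension of k. Then l ⊗_k I is an injective module over the l-algebra l ⊗_k A. -/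
open TensorProduct

noncomputable section CoindAux

variable (k : Type*) [Field k] (A : Type*) [Ring A] [Algebra k A]

/-- Type synonym for the coinduced module `Hom_k(A, I)` in coordinates w.r.t. the
canonical finite basis of `A`. -/
def Coind (I : Type*) : Type _ := Fin (Module.finrank k A) → I

variable (I : Type*) [AddCommGroup I] [Module k I]

instance : AddCommGroup (Coind k A I) := inferInstanceAs (AddCommGroup (Fin _ → I))
instance : Module k (Coind k A I) := inferInstanceAs (Module k (Fin _ → I))

@[simp] lemma Coind.add_apply (w w' : Coind k A I) (t : Fin (Module.finrank k A)) :
    (w + w') t = w t + w' t := rfl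

@[simp] lemma Coind.sum_apply {α : Type*} (s : Finset α) (f : α → Coind k A I)
    (t : Fin (Module.finrank k A)) : (∑ i ∈ s, f i) t = ∑ i ∈ s, f i t :=
  Finset.sum_apply t s f

@[simp] lemma Coind.zero_apply (t : Fin (Module.finrank k A)) :
    (0 : Coind k A I) t = 0 := rfl

@[simp] lemma Coind.ksmul_apply (c : k) (w : Coind k A I) (t : Fin (Module.finrank k A)) :
    (c • w) t = c • w t := rfl

variable [FiniteDimensional k A]

lemma Coind.repr_mul (x a' : A) (j : Fin (Module.finrank k A)) :
    (Module.finBasis k A).repr (x * a') j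
      = ∑ i, (Module.finBasis k A).repr x i *
          (Module.finBasis k A).repr (Module.finBasis k A i * a') j := by
  set b := Module.finBasis k A with hb
  conv_lhs => rw [← b.sum_repr x, Finset.sum_mul]
  rw [map_sum, Finsupp.finset_sum_apply]
  refine Finset.sum_congr rfl fun i _ => ?_
  rw [smul_mul_assoc, map_smul, Finsupp.smul_apply, smul_eq_mul]

noncomputable instance : SMul A (Coind k A I) :=
  ⟨fun a w t => ∑ j, (Module.finBasis k A).repr (Module.finBasis k A t * a) j • w j⟩

lemma Coind.smul_apply (a : A) (w : Coind k A I) (t : Fin (Module.finrank k A)) :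
    (a • w) t = ∑ j, (Module.finBasis k A).repr (Module.finBasis k A t * a) j • w j := rfl

noncomputable instance : MulAction A (Coind k A I) where
  one_smul w := by
    funext t
    rw [Coind.smul_apply]
    simp [Module.Basis.repr_self, Finsupp.single_apply, ite_smul]
    exact (Fintype.sum_eq_single t (fun x hx => if_neg (Ne.symm hx))).trans (if_pos rfl)
  mul_smul a a' w := by
    funext t
    rw [Coind.smul_apply, Coind.smul_apply]
    have L : ∀ j, (Module.finBasis k A).repr (Module.finBasis k A t * (a * a')) j • w j
        = ∑ i, ((Module.finBasis k A).repr (Module.finBasis k A t * a) i *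
            (Module.finBasis k A).repr (Module.finBasis k A i * a') j) • w j := fun j => by
      rw [← mul_assoc, Coind.repr_mul k A (Module.finBasis k A t * a) a', Finset.sum_smul]
    rw [Finset.sum_congr rfl fun j _ => L j]
    simp_rw [mul_smul, Coind.smul_apply, Finset.smul_sum]
    exact Finset.sum_comm

noncomputable instance : DistribMulAction A (Coind k A I) where
  smul_zero a := by funext t; rw [Coind.smul_apply]; simp
  smul_add a w w' := by
    funext t
    rw [Coind.smul_apply]
    simp [Coind.smul_apply, smul_add, Finset.sum_add_distrib]

noncomputable instance : Module A (Coind k A I) where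
  add_smul a a' w := by
    funext t
    rw [Coind.smul_apply]
    simp [Coind.smul_apply, mul_add, add_smul, Finset.sum_add_distrib]
  zero_smul w := by funext t; rw [Coind.smul_apply]; simp

instance : IsScalarTower k A (Coind k A I) where
  smul_assoc c a w := by
    funext t
    rw [Coind.smul_apply, Coind.ksmul_apply, Coind.smul_apply, Finset.smul_sum]
    refine Finset.sum_congr rfl fun j _ => ?_
    rw [mul_smul_comm, map_smul, Finsupp.smul_apply, smul_eq_mul, mul_smul]

/-- `v ↦ aᵢ* ⊗ v`, i.e. `Pi.single i v`, as a `k`-linear map into the coinduced module. -/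
def coindSingle (i : Fin (Module.finrank k A)) : I →ₗ[k] Coind k A I :=
  LinearMap.single k (fun _ => I) i

@[simp] lemma coindSingle_apply (i : Fin (Module.finrank k A)) (v : I)
    (t : Fin (Module.finrank k A)) :
    coindSingle k A I i v t = if t = i then v else 0 := Pi.single_apply i v t

lemma smul_coindSingle (a' : A) (j : Fin (Module.finrank k A)) (v : I) :
    a' • coindSingle k A I j v
      = ∑ i, (Module.finBasis k A).repr (Module.finBasis k A i * a') j • coindSingle k A I i v := by
  funext t
  rw [Coind.smul_apply, Coind.sum_apply]
  simp only [Coind.ksmul_apply, coindSingle_apply, smul_ite, smul_zero]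
  rw [Finset.sum_ite_eq' Finset.univ j
    (fun s => (Module.finBasis k A).repr (Module.finBasis k A t * a') s • v),
    Finset.sum_ite_eq Finset.univ t
    (fun i => (Module.finBasis k A).repr (Module.finBasis k A i * a') j • v)]
  simp

variable [Module A I] [IsScalarTower k A I]

instance : LinearMap.CompatibleSMul (Coind k A I) I k A :=
  ⟨fun f c x => by rw [← smul_one_smul A c x, map_smul, smul_one_smul]⟩

/-- The canonical embedding of `I` into its coinduced module, `A`-linearly. -/
def coindIota : I →ₗ[A] Coind k A I where
  toFun v := fun t => Module.finBasis k A t • v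
  map_add' v w := funext fun t => smul_add _ _ _
  map_smul' a v := by
    funext t
    show Module.finBasis k A t • a • v
      = ∑ j, (Module.finBasis k A).repr (Module.finBasis k A t * a) j • (Module.finBasis k A j • v)
    simp_rw [← smul_assoc, ← Finset.sum_smul]
    rw [Module.Basis.sum_repr]
    simp [smul_eq_mul]

@[simp] lemma coindIota_apply (v : I) (t : Fin (Module.finrank k A)) :
    coindIota k A I v t = Module.finBasis k A t • v := rfl

lemma coindIota_injective : Function.Injective (coindIota k A I) := by
  intro v w hvw
  have hfw : ∀ t, Module.finBasis k A t • v = Module.finBasis k A t • w :=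
    fun t => congrFun hvw t
  calc v = (1 : A) • v := (one_smul _ _).symm
    _ = (∑ i, (Module.finBasis k A).repr 1 i • Module.finBasis k A i) • v := by
        rw [Module.Basis.sum_repr]
    _ = ∑ i, (Module.finBasis k A).repr 1 i • (Module.finBasis k A i • v) := by
        rw [Finset.sum_smul]; simp_rw [smul_assoc]
    _ = ∑ i, (Module.finBasis k A).repr 1 i • (Module.finBasis k A i • w) := by
        simp_rw [hfw]
    _ = (∑ i, (Module.finBasis k A).repr 1 i • Module.finBasis k A i) • w := by
        rw [Finset.sum_smul]; simp_rw [smul_assoc]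
    _ = (1 : A) • w := by rw [Module.Basis.sum_repr]
    _ = w := one_smul _ _

lemma sum_coindSingle_eq_iota (v : I) :
    ∑ i, coindSingle k A I i (Module.finBasis k A i • v) = coindIota k A I v := by
  funext t
  rw [Coind.sum_apply]
  simp only [coindSingle_apply, coindIota_apply]
  rw [Finset.sum_ite_eq Finset.univ t (fun i => Module.finBasis k A i • v)]
  simp

variable (l : Type*) [Field l] [Algebra k l]

/-- Base change of `h ∘ (single i)` to `l`. -/
def bcMap (h : Coind k A I →ₗ[A] I) (i : Fin (Module.finrank k A)) :
    l ⊗[k] I →ₗ[l] l ⊗[k] I :=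
  LinearMap.baseChange l ((h.restrictScalars k) ∘ₗ coindSingle k A I i)

@[simp] lemma bcMap_tmul (h : Coind k A I →ₗ[A] I) (i : Fin (Module.finrank k A))
    (x : l) (v : I) :
    bcMap k A I l h i (x ⊗ₜ[k] v) = x ⊗ₜ[k] h (coindSingle k A I i v) := by
  simp [bcMap]

end CoindAux

set_option maxHeartbeats 2000000 in
/-- Let `k` be a field, `A` a finite-dimensional associative `k`-algebra, `I` an injective
(left) `A`-module, and `l` any field extension of `k`.  Then `l ⊗_k I` is an injective module
over the `l`-algebra `l ⊗_k A`.  (The module structure of `l ⊗[k] A` on `l ⊗[k] I` is the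
canonical one, characterized on pure tensors by `(c ⊗ₜ a) • (x ⊗ₜ i) = (c * x) ⊗ₜ (a • i)`;
here it is taken as a hypothesis, together with this characterization.) -/
theorem stmt_12 (k : Type*) [Field k] (A : Type*) [Ring A] [Algebra k A]
    [FiniteDimensional k A]
    (I : Type*) [AddCommGroup I] [Module A I] [Module k I] [IsScalarTower k A I]
    (hI : Module.Injective A I)
    (l : Type*) [Field l] [Algebra k l]
    [inst : Module (l ⊗[k] A) (l ⊗[k] I)]
    (hcompat : ∀ (c : l) (a : A) (x : l) (i : I),
      (c ⊗ₜ[k] a) • (x ⊗ₜ[k] i) = (c * x) ⊗ₜ[k] (a • i)) :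
    Module.Injective (l ⊗[k] A) (l ⊗[k] I) := by
  classical
  apply Module.Baer.injective
  intro J g
  -- the A-linear retraction of the coinduced embedding
  obtain ⟨h, hh⟩ := hI.out (coindIota k A I) (coindIota_injective k A I)
    (LinearMap.id (R := A) (M := I))
  -- basic facts about the scalar action `inst`
  have Lone : ∀ (a : A) (x : l) (v : I),
      ((1 : l) ⊗ₜ[k] a) • (x ⊗ₜ[k] v) = x ⊗ₜ[k] (a • v) := by
    intro a x v; rw [hcompat, one_mul]
  have Lsc : ∀ (y : l) (z : l ⊗[k] I), (y ⊗ₜ[k] (1 : A)) • z = y • z := by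
    intro y z
    induction z using TensorProduct.induction_on with
    | zero => rw [smul_zero, smul_zero]
    | tmul x v => rw [hcompat, one_smul, TensorProduct.smul_tmul', smul_eq_mul]
    | add z₁ z₂ h₁ h₂ => rw [smul_add, smul_add, h₁, h₂]
  -- extend `g` to an `l`-linear map `ψ` on all of `l ⊗ A`
  let J' : Submodule l (l ⊗[k] A) := J.restrictScalars l
  let gl : J' →ₗ[l] l ⊗[k] I :=
    { toFun := fun x => g ⟨x.1, x.2⟩
      map_add' := fun x y => by
        show g ⟨(x + y).1, (x + y).2⟩ = g ⟨x.1, x.2⟩ + g ⟨y.1, y.2⟩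
        exact map_add g ⟨x.1, x.2⟩ ⟨y.1, y.2⟩
      map_smul' := fun c x => by
        have h1 : (⟨(c • x).1, (c • x).2⟩ : J)
            = ((c ⊗ₜ[k] (1 : A)) : l ⊗[k] A) • (⟨x.1, x.2⟩ : J) := by
          apply Subtype.ext
          show c • (x.1 : l ⊗[k] A) = (c ⊗ₜ[k] (1 : A)) • x.1
          rw [Algebra.smul_def, smul_eq_mul]
          congr 1
        show g ⟨(c • x).1, (c • x).2⟩ = (RingHom.id l) c • g ⟨x.1, x.2⟩
        rw [h1, map_smul]
        exact Lsc c _ }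
  obtain ⟨ψ, hψ⟩ := LinearMap.exists_extend gl
  have ψJ : ∀ (x : l ⊗[k] A) (hx : x ∈ J), ψ x = g ⟨x, hx⟩ := by
    intro x hx
    exact congrArg (fun f => f ⟨x, hx⟩) hψ
  set q₀ : l ⊗[k] I :=
    ∑ i, bcMap k A I l h i (ψ ((1 : l) ⊗ₜ[k] (Module.finBasis k A i))) with hq₀
  -- key computation 1
  have LC3 : ∀ (a' : A) (j : Fin (Module.finrank k A)) (u : l ⊗[k] I),
      ((1 : l) ⊗ₜ[k] a') • bcMap k A I l h j u
        = ∑ i, (Module.finBasis k A).repr (Module.finBasis k A i * a') j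
            • bcMap k A I l h i u := by
    intro a' j u
    induction u using TensorProduct.induction_on with
    | zero => simp [smul_zero]
    | tmul x v =>
        rw [bcMap_tmul, Lone, ← map_smul h, smul_coindSingle, map_sum, tmul_sum]
        refine Finset.sum_congr rfl fun i _ => ?_
        rw [LinearMap.map_smul_of_tower, tmul_smul, bcMap_tmul]
    | add u₁ u₂ h₁ h₂ =>
        rw [map_add, smul_add, h₁, h₂, ← Finset.sum_add_distrib]
        refine Finset.sum_congr rfl fun i _ => ?_
        rw [map_add, smul_add]
  -- key computation 2
  have LCC : ∀ w : l ⊗[k] I,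
      ∑ i, bcMap k A I l h i (((1 : l) ⊗ₜ[k] (Module.finBasis k A i)) • w) = w := by
    intro w
    induction w using TensorProduct.induction_on with
    | zero => simp [smul_zero]
    | tmul x v =>
        have : ∀ i : Fin (Module.finrank k A),
            bcMap k A I l h i (((1 : l) ⊗ₜ[k] (Module.finBasis k A i)) • (x ⊗ₜ[k] v))
              = x ⊗ₜ[k] h (coindSingle k A I i (Module.finBasis k A i • v)) := by
          intro i; rw [Lone, bcMap_tmul]
        rw [Finset.sum_congr rfl fun i _ => this i, ← tmul_sum, ← map_sum,
          sum_coindSingle_eq_iota]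
        rw [hh]
        rfl
    | add w₁ w₂ h₁ h₂ =>
        simp_rw [smul_add, map_add, Finset.sum_add_distrib]
        rw [h₁, h₂]
  -- main computation
  have MAIN : ∀ x : l ⊗[k] A,
      x • q₀ = ∑ i, bcMap k A I l h i
        (ψ (((1 : l) ⊗ₜ[k] (Module.finBasis k A i)) * x)) := by
    intro x
    induction x using TensorProduct.induction_on with
    | zero => simp [zero_smul]
    | tmul y a' =>
        have e1 : (y ⊗ₜ[k] a') • q₀
            = y • (((1 : l) ⊗ₜ[k] a') • q₀) := by
          rw [show (y ⊗ₜ[k] a') = (y ⊗ₜ[k] (1 : A)) * ((1 : l) ⊗ₜ[k] a') by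
            rw [Algebra.TensorProduct.tmul_mul_tmul, mul_one, one_mul]]
          rw [mul_smul, Lsc]
        rw [e1, hq₀, Finset.smul_sum]
        simp_rw [LC3]
        rw [Finset.sum_comm]
        have e2 : ∀ i : Fin (Module.finrank k A),
            bcMap k A I l h i (ψ (((1 : l) ⊗ₜ[k] (Module.finBasis k A i)) * (y ⊗ₜ[k] a')))
              = y • ∑ j, (Module.finBasis k A).repr (Module.finBasis k A i * a') j
                  • bcMap k A I l h i (ψ ((1 : l) ⊗ₜ[k] (Module.finBasis k A j))) := by
          intro i
          rw [Algebra.TensorProduct.tmul_mul_tmul, one_mul]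
          have e3 : y ⊗ₜ[k] (Module.finBasis k A i * a')
              = y • ((1 : l) ⊗ₜ[k] (Module.finBasis k A i * a')) := by
            rw [TensorProduct.smul_tmul', smul_eq_mul, mul_one]
          rw [e3]
          conv_lhs =>
            rw [show (Module.finBasis k A i * a')
                = ∑ j, (Module.finBasis k A).repr (Module.finBasis k A i * a') j
                    • Module.finBasis k A j from (Module.Basis.sum_repr _ _).symm]
          rw [tmul_sum, map_smul, map_sum, map_smul, map_sum]
          congr 1
          refine Finset.sum_congr rfl fun j _ => ?_
          rw [tmul_smul, LinearMap.map_smul_of_tower, LinearMap.map_smul_of_tower]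
        rw [Finset.sum_congr rfl fun i _ => e2 i, ← Finset.smul_sum]
    | add x₁ x₂ h₁ h₂ =>
        rw [add_smul, h₁, h₂, ← Finset.sum_add_distrib]
        refine Finset.sum_congr rfl fun i _ => ?_
        rw [mul_add, map_add, map_add]
  refine ⟨{ toFun := fun b => b • q₀
            map_add' := fun b b' => add_smul b b' q₀
            map_smul' := fun r b => by
              show (r • b) • q₀ = r • b • q₀
              rw [smul_eq_mul, mul_smul] }, ?_⟩
  intro x hx
  show x • q₀ = g ⟨x, hx⟩
  rw [MAIN x]
  have key : ∀ i : Fin (Module.finrank k A),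
      ψ (((1 : l) ⊗ₜ[k] (Module.finBasis k A i)) * x)
        = ((1 : l) ⊗ₜ[k] (Module.finBasis k A i)) • g ⟨x, hx⟩ := by
    intro i
    have hmem : ((1 : l) ⊗ₜ[k] (Module.finBasis k A i)) * x ∈ J :=
      J.smul_mem _ hx
    rw [ψJ _ hmem]
    have h2 : (⟨((1 : l) ⊗ₜ[k] (Module.finBasis k A i)) * x, hmem⟩ : J)
        = ((1 : l) ⊗ₜ[k] (Module.finBasis k A i)) • (⟨x, hx⟩ : J) := by
      apply Subtype.ext
      rw [SetLike.val_smul, smul_eq_mul]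
    rw [h2, map_smul]
  rw [Finset.sum_congr rfl fun i _ => congrArg _ (key i)]
  exact LCC (g ⟨x, hx⟩)
end

section
/- Let C be an abelian category and Pro(C) its pro-category. If X is an injective object of C, then X remains injective when regarded as an object of Pro(C). -/
open CategoryTheory Limits

universe w v u v' u'

/-- An axiomatization of the pro-category `Pro(C)` of an abelian category `C`: an abelian
category `P` together with a fully faithful exact embedding `ι : C ⥤ P` such that `P` has
cofiltered limits, every object of `P` is a (small) cofiltered limit of objects of `C`, and
for every cofiltered limit `"lim"_I F` of objects of `C` and every object `X` of `C` one has
`Hom_P("lim"_I F, ι X) = colim_{Iᵒᵖ} Hom_C(F i, X)` (expressed elementwise in the fields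
`hom_surj` and `hom_inj`). -/
structure ProData (C : Type u) [Category.{v} C] [Abelian C]
    (P : Type u') [Category.{v'} P] [Abelian P] : Type (max u v u' v' (v+1)) where
  ι : C ⥤ P
  full : ι.Full
  faithful : ι.Faithful
  exact_left : Nonempty (PreservesFiniteLimits ι)
  exact_right : Nonempty (PreservesFiniteColimits ι)
  hasCofilteredLimits : ∀ (I : Cat.{v, v}), IsCofiltered I → ∀ F : I ⥤ P, HasLimit F
  hom_surj : ∀ (I : Cat.{v, v}), IsCofiltered I → ∀ (F : I ⥤ C)
    (c : Cone (F ⋙ ι)), IsLimit c → ∀ (X : C) (f : c.pt ⟶ ι.obj X),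
      ∃ (i : I) (g : F.obj i ⟶ X), f = c.π.app i ≫ ι.map g
  hom_inj : ∀ (I : Cat.{v, v}), IsCofiltered I → ∀ (F : I ⥤ C)
    (c : Cone (F ⋙ ι)), IsLimit c → ∀ (X : C) (i j : I)
    (g : F.obj i ⟶ X) (h : F.obj j ⟶ X),
      c.π.app i ≫ ι.map g = c.π.app j ≫ ι.map h →
      ∃ (k : I) (a : k ⟶ i) (b : k ⟶ j), F.map a ≫ g = F.map b ≫ h
  presentation : ∀ Y : P, ∃ (I : Cat.{v, v}) (_ : IsCofiltered I) (F : I ⥤ C)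
    (c : Cone (F ⋙ ι)), Nonempty (IsLimit c) ∧ Nonempty (c.pt ≅ Y)

section Aux

variable {C : Type u} [Category.{v} C] [Abelian C]
    {P : Type u'} [Category.{v'} P] [Abelian P]

/-- Every monomorphism out of `ι X`, for `X` injective, splits. -/
theorem ProData.splits (D : ProData C P) (X : C) (hX : Injective X)
    {Y : P} (m : D.ι.obj X ⟶ Y) [Mono m] :
    ∃ r : Y ⟶ D.ι.obj X, m ≫ r = 𝟙 _ := by
  haveI := D.full
  haveI := D.faithful
  obtain ⟨hL⟩ := D.exact_left
  letI := preservesBinaryBiproducts_of_preservesBinaryProducts D.ι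
  haveI : D.ι.Additive := Functor.additive_of_preservesBinaryBiproducts D.ι
  obtain ⟨I, hI, F, c, ⟨hc⟩, ⟨e⟩⟩ := D.presentation Y
  haveI := hI
  set m' : D.ι.obj X ⟶ c.pt := m ≫ e.inv with hm'
  haveI : Mono m' := mono_comp _ _
  -- levelwise components of `m'`
  let u : ∀ i : I, X ⟶ F.obj i := fun i => D.ι.preimage (m' ≫ c.π.app i)
  have hu : ∀ i, D.ι.map (u i) = m' ≫ c.π.app i := fun i => D.ι.map_preimage _
  have hnat : ∀ {i j : I} (a : i ⟶ j), u i ≫ F.map a = u j := by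
    intro i j a
    apply D.ι.map_injective
    rw [D.ι.map_comp, hu, hu, Category.assoc]
    have := c.w a
    simp only [Functor.comp_map] at this
    rw [this]
  -- kernel diagram
  let K : I ⥤ C :=
    { obj := fun i => kernel (u i)
      map := fun {i j} a => kernel.lift (u j) (kernel.ι (u i))
        (by rw [← hnat a, ← Category.assoc, kernel.condition, zero_comp])
      map_id := by
        intro i
        rw [← cancel_mono (kernel.ι (u i))]
        simp
      map_comp := by
        intro i j k a b
        rw [← cancel_mono (kernel.ι (u k))]
        simp }
  have hK : ∀ {i j : I} (a : i ⟶ j), K.map a ≫ kernel.ι (u j) = kernel.ι (u i) := by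
    intro i j a; simp [K]
  haveI := D.hasCofilteredLimits I hI (K ⋙ D.ι)
  let c' : Cone (K ⋙ D.ι) := limit.cone (K ⋙ D.ι)
  have hc' : IsLimit c' := limit.isLimit _
  -- each `c'.π.app i ≫ ι (kernel.ι (u i))` composed with `m'` vanishes
  have hs : ∀ i : I, c'.π.app i ≫ D.ι.map (kernel.ι (u i)) = 0 := by
    intro i
    rw [← cancel_mono m']
    apply hc.hom_ext
    intro j
    obtain ⟨k, a, b, -⟩ := IsCofilteredOrEmpty.cone_objs i j
    have h1 : c'.π.app i ≫ D.ι.map (kernel.ι (u i))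
        = c'.π.app k ≫ D.ι.map (kernel.ι (u k)) := by
      rw [← c'.w a]
      simp only [Functor.comp_map, Category.assoc, ← D.ι.map_comp, kernel.lift_ι, K]
    have h2 : D.ι.map (kernel.ι (u k)) ≫ m' ≫ c.π.app j = 0 := by
      rw [← hu j, ← hnat b, D.ι.map_comp, ← Category.assoc, ← D.ι.map_comp,
        kernel.condition, D.ι.map_zero, zero_comp]
    simp only [Category.assoc, h1, h2, comp_zero, zero_comp]
  -- apply `hom_inj` to find a level where the kernel vanishes
  obtain ⟨i₀⟩ := IsCofiltered.nonempty (C := I)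
  obtain ⟨k, a, b, hab⟩ := D.hom_inj I hI K c' hc' X i₀ i₀ (kernel.ι (u i₀)) 0
    (by rw [hs i₀, D.ι.map_zero, comp_zero])
  rw [comp_zero, hK a] at hab
  haveI : Mono (u k) := Abelian.mono_of_kernel_ι_eq_zero _ hab
  -- use injectivity of `X` in `C`
  refine ⟨e.inv ≫ c.π.app k ≫ D.ι.map (Injective.factorThru (𝟙 X) (u k)), ?_⟩
  have heq : m ≫ e.inv ≫ c.π.app k ≫ D.ι.map (Injective.factorThru (𝟙 X) (u k))
      = D.ι.map (u k ≫ Injective.factorThru (𝟙 X) (u k)) := by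
    rw [D.ι.map_comp, hu k, hm']
    simp
  rw [heq, Injective.comp_factorThru, D.ι.map_id]

end Aux

/-- Let `C` be an abelian category and `Pro(C)` its pro-category.  If `X` is an injective
object of `C`, then `X` remains injective when regarded as an object of `Pro(C)`. -/
theorem stmt_13 {C : Type u} [Category.{v} C] [Abelian C]
    {P : Type u'} [Category.{v'} P] [Abelian P] (D : ProData C P)
    (X : C) (hX : Injective X) :
    Injective (D.ι.obj X) := by
  constructor
  intro A B g f hf
  haveI : Mono (pushout.inr f g) := Abelian.mono_pushout_of_mono_f f g
  obtain ⟨r, hr⟩ := D.splits X hX (pushout.inr f g)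
  refine ⟨pushout.inl f g ≫ r, ?_⟩
  rw [← Category.assoc, pushout.condition, Category.assoc, hr, Category.comp_id]
end

section
/- Let C be an abelian category and let Y → Z be a morphism in Pro(C) with the following property: for every morphism Y → Y′ with Y′ an object of C, there is a commutative square with top row Y → Z, left column Y → Y′, bottom row a monomorphism Y′ → Z′ in Pro(C), and right column Z → Z′. Then Y → Z is a monomorphism in Pro(C). -/
open CategoryTheory Limits

universe w v u v' u'

/-- Let `C` be an abelian category and let `Y ⟶ Z` be a morphism in `Pro(C)` with the
following property: for every morphism `Y ⟶ Y′` with `Y′` an object of `C`, there is a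
commutative square with top row `Y ⟶ Z`, left column `Y ⟶ Y′`, bottom row a monomorphism
`Y′ ⟶ Z′` in `Pro(C)`, and right column `Z ⟶ Z′`.  Then `Y ⟶ Z` is a monomorphism in
`Pro(C)`. -/
theorem stmt_17 {C : Type u} [Category.{v} C] [Abelian C]
    {P : Type u'} [Category.{v'} P] [Abelian P] (D : ProData C P)
    {Y Z : P} (φ : Y ⟶ Z)
    (hsq : ∀ (Y' : C) (u : Y ⟶ D.ι.obj Y'),
      ∃ (Z' : P) (v : D.ι.obj Y' ⟶ Z') (w : Z ⟶ Z'), Mono v ∧ u ≫ v = φ ≫ w) :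
    Mono φ := by
  apply Abelian.mono_of_kernel_ι_eq_zero
  obtain ⟨I, hI, F, c, ⟨hc⟩, ⟨e⟩⟩ := D.presentation Y
  -- It suffices to show that each component of `kernel.ι φ ≫ e.inv` vanishes.
  have : kernel.ι φ ≫ e.inv = 0 := by
    apply hc.hom_ext
    intro i
    simp only [Category.assoc, Limits.zero_comp]
    obtain ⟨Z', v, w, hv, hcomm⟩ := hsq (F.obj i) (e.inv ≫ c.π.app i)
    have : kernel.ι φ ≫ (e.inv ≫ c.π.app i) ≫ v = 0 := by
      rw [hcomm, ← Category.assoc, kernel.condition, Limits.zero_comp]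
    rw [← Category.assoc] at this
    exact (Limits.zero_of_comp_mono v (by simpa using this))
  have h2 : kernel.ι φ = kernel.ι φ ≫ e.inv ≫ e.hom := by simp
  rw [h2, ← Category.assoc, this, Limits.zero_comp]
end

section
/- Let C be an abelian category and C₀ ⊆ C a full abelian subcategory closed under the formation of subobjects in C (for instance, a Serre subcategory). Then the left adjoint X ↦ X̂ of the inclusion Pro(C₀) ↪ Pro(C), evaluated on an object X of C, is naturally isomorphic to the pro-object "lim" X′, where X′ ranges over the cofiltered directed set of quotients of X lying in C₀, with transition maps the induced quotient maps. -/
open CategoryTheory Limits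

universe w v u v' u'

universe v'' u''

open ZeroObject

variable {C : Type u} [Category.{v} C]

/-- The cofiltered system of quotients of `X` lying in the full subcategory determined by
`P₀`: objects are epimorphisms `X ⟶ X′` with `P₀ X′`, and morphisms are the induced
(quotient) maps under `X`. -/
structure QuotIndex (P₀ : C → Prop) (X : C) : Type max u v where
  obj : ObjectProperty.FullSubcategory P₀
  e : X ⟶ obj.obj
  epi : Epi e

instance (P₀ : C → Prop) (X : C) : Category (QuotIndex P₀ X) where
  Hom A B := {f : A.obj.obj ⟶ B.obj.obj // A.e ≫ f = B.e}
  id A := ⟨𝟙 A.obj.obj, Category.comp_id _⟩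
  comp f g := ⟨f.1 ≫ g.1, by rw [← Category.assoc, f.2, g.2]⟩
  id_comp f := Subtype.ext (Category.id_comp f.1)
  comp_id f := Subtype.ext (Category.comp_id f.1)
  assoc f g h := Subtype.ext (Category.assoc f.1 g.1 h.1)

/-- The diagram of quotients of `X` lying in the full subcategory determined by `P₀`,
with transition maps the induced quotient maps. -/
def quotDiagram (P₀ : C → Prop) (X : C) : QuotIndex P₀ X ⥤ ObjectProperty.FullSubcategory P₀ where
  obj A := A.obj
  map f := ⟨f.1⟩

attribute [-instance] CategoryTheory.Preadditive.fullSubcategory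

attribute [-instance] CategoryTheory.ObjectProperty.instHasZeroMorphismsFullSubcategory

section Aux

variable [Abelian C] {P₀ : C → Prop} [Abelian (ObjectProperty.FullSubcategory P₀)]
  {P : Type u'} [Category.{v'} P] [Abelian P] {D : ProData C P}
  {P₀P : Type u''} [Category.{v''} P₀P] [Abelian P₀P]
  {D₀ : ProData (ObjectProperty.FullSubcategory P₀) P₀P}
  {inc : P₀P ⥤ P}
  (hcomp : ObjectProperty.ι P₀ ⋙ D.ι ≅ D₀.ι ⋙ inc)
  {L : P ⥤ P₀P} (adj : L ⊣ inc) {X : C}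

/-- The canonical projection `L (ι X) ⟶ ι₀ X'` for a quotient `X'` of `X` lying in `C₀`,
obtained from the quotient map by adjunction. -/
def piMap (i : QuotIndex P₀ X) : L.obj (D.ι.obj X) ⟶ D₀.ι.obj i.obj :=
  (adj.homEquiv (D.ι.obj X) (D₀.ι.obj i.obj)).symm (D.ι.map i.e ≫ hcomp.hom.app i.obj)

lemma keyEq (i : QuotIndex P₀ X) (Y : ObjectProperty.FullSubcategory P₀) (u : i.obj ⟶ Y) :
    adj.homEquiv (D.ι.obj X) (D₀.ι.obj Y) (piMap hcomp adj i ≫ D₀.ι.map u)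
      = D.ι.map (i.e ≫ (ObjectProperty.ι P₀).map u) ≫ hcomp.hom.app Y := by
  rw [Adjunction.homEquiv_naturality_right, piMap, Equiv.apply_symm_apply,
    D.ι.map_comp, Category.assoc, Category.assoc]
  congr 1
  exact (hcomp.hom.naturality u).symm

lemma piEq {i j : QuotIndex P₀ X} {Y : ObjectProperty.FullSubcategory P₀}
    (u : i.obj ⟶ Y) (v : j.obj ⟶ Y)
    (h : i.e ≫ (ObjectProperty.ι P₀).map u
        = j.e ≫ (ObjectProperty.ι P₀).map v) :
    piMap hcomp adj i ≫ D₀.ι.map u = piMap hcomp adj j ≫ D₀.ι.map v := by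
  apply (adj.homEquiv (D.ι.obj X) (D₀.ι.obj Y)).injective
  rw [keyEq, keyEq, h]

lemma piEq' {i j : QuotIndex P₀ X} {Y : ObjectProperty.FullSubcategory P₀}
    (u : i.obj ⟶ Y) (v : j.obj ⟶ Y)
    (h : piMap hcomp adj i ≫ D₀.ι.map u = piMap hcomp adj j ≫ D₀.ι.map v) :
    i.e ≫ (ObjectProperty.ι P₀).map u
      = j.e ≫ (ObjectProperty.ι P₀).map v := by
  have h2 := congrArg (adj.homEquiv (D.ι.obj X) (D₀.ι.obj Y)) h
  rw [keyEq, keyEq] at h2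
  exact D.faithful.map_injective ((cancel_mono (hcomp.hom.app Y)).mp h2)

/-- Any two quotients of `X` lying in `C₀` admit a common refinement, obtained from the
image of `X` in the biproduct. -/
lemma quotRefine (hsub : ∀ {A B : C} (f : A ⟶ B), Mono f → P₀ B → P₀ A)
    [PreservesFiniteLimits (ObjectProperty.ι P₀)]
    (i j : QuotIndex P₀ X) :
    ∃ (r : QuotIndex P₀ X) (a : r ⟶ i) (b : r ⟶ j), True := by
  haveI : PreservesBinaryBiproduct i.obj j.obj (ObjectProperty.ι P₀) :=
    preservesBinaryBiproduct_of_preservesBinaryProduct _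
  set F := ObjectProperty.ι P₀
  set Z := (i.obj ⊞ j.obj : ObjectProperty.FullSubcategory P₀) with hZ
  have e1 : (F.mapBiprod i.obj j.obj).inv ≫ F.map biprod.fst = biprod.fst := by
    rw [Iso.inv_comp_eq, Functor.mapBiprod_hom]; simp
  have e2 : (F.mapBiprod i.obj j.obj).inv ≫ F.map biprod.snd = biprod.snd := by
    rw [Iso.inv_comp_eq, Functor.mapBiprod_hom]; simp
  let h : X ⟶ F.obj Z := biprod.lift i.e j.e ≫ (F.mapBiprod i.obj j.obj).inv
  have h1 : h ≫ F.map biprod.fst = i.e := by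
    simp only [h, Category.assoc, e1]
    exact biprod.lift_fst _ _
  have h2 : h ≫ F.map biprod.snd = j.e := by
    simp only [h, Category.assoc, e2]
    exact biprod.lift_snd _ _
  refine ⟨⟨⟨Abelian.image h, hsub (Abelian.image.ι h) inferInstance Z.2⟩,
      Abelian.factorThruImage h, inferInstance⟩,
    ⟨Abelian.image.ι h ≫ F.map biprod.fst, ?_⟩,
    ⟨Abelian.image.ι h ≫ F.map biprod.snd, ?_⟩, trivial⟩
  · rw [← Category.assoc]
    show (Abelian.factorThruImage h ≫ Abelian.image.ι h) ≫ F.map biprod.fst = i.e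
    rw [Abelian.image.fac]; exact h1
  · rw [← Category.assoc]
    show (Abelian.factorThruImage h ≫ Abelian.image.ι h) ≫ F.map biprod.snd = j.e
    rw [Abelian.image.fac]; exact h2

/-- Key compatibility: any equality of composites out of the quotients of `X` which holds at
the level of `X` holds for the legs of an arbitrary cone over the quotient diagram. -/
lemma coneCompat (hsub : ∀ {A B : C} (f : A ⟶ B), Mono f → P₀ B → P₀ A)
    [PreservesFiniteLimits (ObjectProperty.ι P₀)]
    (s : Cone (quotDiagram P₀ X ⋙ D₀.ι)) {i j : QuotIndex P₀ X}
    {Y : ObjectProperty.FullSubcategory P₀} (u : i.obj ⟶ Y) (v : j.obj ⟶ Y)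
    (h : i.e ≫ (ObjectProperty.ι P₀).map u
        = j.e ≫ (ObjectProperty.ι P₀).map v) :
    s.π.app i ≫ D₀.ι.map u = s.π.app j ≫ D₀.ι.map v := by
  obtain ⟨r, a, b, -⟩ := quotRefine hsub i j
  haveI := r.epi
  have hab : (quotDiagram P₀ X).map a ≫ u = (quotDiagram P₀ X).map b ≫ v := by
    apply (ObjectProperty.ι P₀).map_injective
    apply (cancel_epi r.e).mp
    erw [Functor.map_comp, Functor.map_comp, ← Category.assoc, ← Category.assoc]
    show (r.e ≫ a.1) ≫ _ = (r.e ≫ b.1) ≫ _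
    rw [a.2, b.2]
    exact h
  have ha : s.π.app r ≫ D₀.ι.map ((quotDiagram P₀ X).map a) = s.π.app i := by
    simpa [Functor.comp_map] using (s.π.naturality a).symm
  have hb : s.π.app r ≫ D₀.ι.map ((quotDiagram P₀ X).map b) = s.π.app j := by
    simpa [Functor.comp_map] using (s.π.naturality b).symm
  calc s.π.app i ≫ D₀.ι.map u
      = s.π.app r ≫ D₀.ι.map ((quotDiagram P₀ X).map a ≫ u) := by
        erw [D₀.ι.map_comp, ← Category.assoc, ha]
    _ = s.π.app r ≫ D₀.ι.map ((quotDiagram P₀ X).map b ≫ v) := by rw [hab]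
    _ = s.π.app j ≫ D₀.ι.map v := by
        erw [D₀.ι.map_comp, ← Category.assoc, hb]

/-- A one-sided version of `coneCompat`, for comparing with a single projection. -/
lemma coneCompatPi (hsub : ∀ {A B : C} (f : A ⟶ B), Mono f → P₀ B → P₀ A)
    [PreservesFiniteLimits (ObjectProperty.ι P₀)]
    (s : Cone (quotDiagram P₀ X ⋙ D₀.ι)) {i j : QuotIndex P₀ X}
    (u : i.obj ⟶ j.obj)
    (h : piMap hcomp adj i ≫ D₀.ι.map u = piMap hcomp adj j) :
    s.π.app i ≫ D₀.ι.map u = s.π.app j := by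
  have h2 : piMap hcomp adj i ≫ D₀.ι.map u
      = piMap hcomp adj j ≫ D₀.ι.map (𝟙 j.obj) := by
    rw [CategoryTheory.Functor.map_id, h]
    exact (Category.comp_id _).symm
  have h3 := coneCompat hsub s u (𝟙 j.obj) (piEq' hcomp adj u (𝟙 j.obj) h2)
  rw [h3]
  dsimp only [quotDiagram]
  rw [CategoryTheory.Functor.map_id]
  exact Category.comp_id _

/-- Every morphism from `L (ι X)` to an object of `C₀` factors through one of the canonical
projections `piMap`. -/
lemma piFactor (hsub : ∀ {A B : C} (f : A ⟶ B), Mono f → P₀ B → P₀ A)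
    (Y : ObjectProperty.FullSubcategory P₀) (f : L.obj (D.ι.obj X) ⟶ D₀.ι.obj Y) :
    ∃ (i : QuotIndex P₀ X) (g : i.obj ⟶ Y), f = piMap hcomp adj i ≫ D₀.ι.map g := by
  obtain ⟨f₀, hf₀⟩ := D.full.map_surjective
    (show D.ι.obj X ⟶ D.ι.obj Y.obj from
      adj.homEquiv (D.ι.obj X) (D₀.ι.obj Y) f ≫ hcomp.inv.app Y)
  refine ⟨⟨⟨Abelian.image f₀, hsub (Abelian.image.ι f₀) inferInstance Y.2⟩,
      Abelian.factorThruImage f₀, inferInstance⟩, ObjectProperty.homMk (Abelian.image.ι f₀), ?_⟩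
  apply (adj.homEquiv (D.ι.obj X) (D₀.ι.obj Y)).injective
  rw [keyEq]
  show _ = D.ι.map (Abelian.factorThruImage f₀ ≫ Abelian.image.ι f₀) ≫ hcomp.hom.app Y
  rw [Abelian.image.fac, hf₀]
  simp

end Aux

/-- Let `C` be an abelian category and `C₀ ⊆ C` a full abelian subcategory closed under the
formation of subobjects in `C`.  Then the left adjoint `X ↦ X̂` of the inclusion
`Pro(C₀) ↪ Pro(C)` (the completion of `C` along `C₀`), evaluated on an object `X` of `C`, is
naturally isomorphic to the pro-object `"lim" X′`, where `X′` ranges over the cofiltered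
system of quotients of `X` lying in `C₀`, with transition maps the induced quotient maps. -/
theorem stmt_18 [Abelian C] (P₀ : C → Prop)
    (hzero : P₀ 0)
    (hsub : ∀ {X Y : C} (f : X ⟶ Y), Mono f → P₀ Y → P₀ X)
    [Abelian (ObjectProperty.FullSubcategory P₀)]
    [PreservesFiniteLimits (ObjectProperty.ι P₀)]
    [PreservesFiniteColimits (ObjectProperty.ι P₀)]
    {P : Type u'} [Category.{v'} P] [Abelian P] (D : ProData C P)
    {P₀P : Type u''} [Category.{v''} P₀P] [Abelian P₀P]
    (D₀ : ProData (ObjectProperty.FullSubcategory P₀) P₀P)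
    (inc : P₀P ⥤ P) [inc.Full] [inc.Faithful]
    (hcomp : ObjectProperty.ι P₀ ⋙ D.ι ≅ D₀.ι ⋙ inc)
    (L : P ⥤ P₀P) (adj : L ⊣ inc)
    (X : C) :
    ∃ c : Cone (quotDiagram P₀ X ⋙ D₀.ι),
      Nonempty (IsLimit c) ∧ Nonempty (c.pt ≅ L.obj (D.ι.obj X)) := by
  classical
  -- the candidate limit cone, with apex `L (ι X)`
  let c : Cone (quotDiagram P₀ X ⋙ D₀.ι) :=
    { pt := L.obj (D.ι.obj X)
      π :=
        { app := fun i => piMap hcomp adj i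
          naturality := by
            intro i j f
            simp only [Functor.const_obj_map, Category.id_comp, Functor.comp_map]
            have h : i.e ≫ (ObjectProperty.ι P₀).map ((quotDiagram P₀ X).map f)
                = j.e ≫ (ObjectProperty.ι P₀).map (𝟙 j.obj) := by
              show i.e ≫ f.1 = j.e ≫ 𝟙 j.obj.obj
              rw [Category.comp_id]; exact f.2
            have := piEq hcomp adj ((quotDiagram P₀ X).map f) (𝟙 j.obj) h
            refine Eq.trans ?_ this.symm
            erw [D₀.ι.map_id, Category.comp_id, Category.id_comp] } }
  -- a presentation of `L (ι X)` as a small cofiltered limit of objects of `C₀`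
  obtain ⟨K, hK, G, dL, ⟨hlim⟩, ⟨ψ⟩⟩ := D₀.presentation (L.obj (D.ι.obj X))
  have hch : ∀ k : K, ∃ (i : QuotIndex P₀ X) (g : i.obj ⟶ G.obj k),
      ψ.inv ≫ dL.π.app k = piMap hcomp adj i ≫ D₀.ι.map g := fun k =>
    piFactor hcomp adj hsub (G.obj k) (ψ.inv ≫ dL.π.app k)
  choose ik gk hgk using hch
  -- transporting a cone over the quotient diagram to a cone over the presentation diagram
  let sW : Cone (quotDiagram P₀ X ⋙ D₀.ι) → Cone (G ⋙ D₀.ι) := fun s =>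
    { pt := s.pt
      π :=
        { app := fun k => s.π.app (ik k) ≫ D₀.ι.map (gk k)
          naturality := by
            intro k k' a
            simp only [Functor.const_obj_map, Category.id_comp, Functor.comp_map,
              Category.assoc]
            have hpi : piMap hcomp adj (ik k') ≫ D₀.ι.map (gk k')
                = piMap hcomp adj (ik k) ≫ D₀.ι.map (gk k ≫ G.map a) := by
              rw [← hgk k', D₀.ι.map_comp, ← Category.assoc, ← hgk k, Category.assoc]
              have := dL.w a
              simp only [Functor.comp_map] at this
              rw [this]
            have := coneCompat hsub s (gk k') (gk k ≫ G.map a)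
              (piEq' hcomp adj _ _ hpi)
            erw [this, D₀.ι.map_comp]
            exact Category.id_comp _
          } }
  refine ⟨c, ⟨?_⟩, ⟨Iso.refl _⟩⟩
  refine
    { lift := fun s => hlim.lift (sW s) ≫ ψ.hom
      fac := ?_
      uniq := ?_ }
  · intro s i
    obtain ⟨k₀, h₀, hh⟩ := D₀.hom_surj K hK G dL hlim i.obj
      (ψ.hom ≫ piMap hcomp adj i)
    have e1 : piMap hcomp adj (ik k₀) ≫ D₀.ι.map (gk k₀ ≫ h₀)
        = piMap hcomp adj i := by
      rw [D₀.ι.map_comp, ← Category.assoc, ← hgk k₀, Category.assoc, ← hh,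
        ← Category.assoc, Iso.inv_hom_id]
      exact Category.id_comp _
    have e2 := coneCompatPi hcomp adj hsub s (gk k₀ ≫ h₀) e1
    have e3 : (hlim.lift (sW s) ≫ ψ.hom) ≫ piMap hcomp adj i
        = s.π.app (ik k₀) ≫ D₀.ι.map (gk k₀ ≫ h₀) := by
      rw [Category.assoc, hh, ← Category.assoc, hlim.fac (sW s) k₀]
      show (s.π.app (ik k₀) ≫ D₀.ι.map (gk k₀)) ≫ D₀.ι.map h₀ = _
      erw [D₀.ι.map_comp, Category.assoc]
    show (hlim.lift (sW s) ≫ ψ.hom) ≫ piMap hcomp adj i = s.π.app i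
    rw [e3]
    exact e2
  · intro s m hm
    have key : m ≫ ψ.inv = hlim.lift (sW s) := by
      apply hlim.hom_ext
      intro k
      rw [hlim.fac (sW s) k, Category.assoc, hgk k, ← Category.assoc]
      show (m ≫ piMap hcomp adj (ik k)) ≫ D₀.ι.map (gk k) = _
      erw [hm (ik k)]
      rfl
    calc m = (m ≫ ψ.inv) ≫ ψ.hom := by simp
      _ = hlim.lift (sW s) ≫ ψ.hom := by rw [key]
end
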